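/- arXiv:1807.01184 — 5 statements merged into one kernel-verified Lean document; each statement's English description precedes it below -/
import Mathlib

section
/- Let $1\le p<u<\infty$, $1/p+1/p'=1$, $1/u+1/u'=1$, and let $j\in\mathbb{N}_0$. For a complex sequence $\lambda=\{\lambda_k\}_{k\in\mathbb{Z}^d}$ set $\|\lambda\|^{(j)}_{u,p} = 2^{jd(1/p-1/u)}\sum_{m\in\mathbb{Z}^d}\big(\sum_{k:\,Q_{0,k}\subset Q_{-j,m}}|\lambda_k|^{p'}\big)^{1/p'}$. Then: (a) $2^{-jd/u}\,\|\lambda\,|\,\ell_1\| \le \|\lambda\|^{(j)}_{u,p} \le 2^{jd(1/p-1/u)}\,\|\lambda\,|\,\ell_1\|$, so the space $\mathcal{X}^{(j)}_{u,p}(\mathbb{Z}^d)$ of sequences with $\|\lambda\|^{(j)}_{u,p}<\infty$ coincides with $\ell_1(\mathbb{Z}^d)$ with equivalent norms; (b) $\|\lambda\,|\,\ell_{u'}\|\le \|\lambda\|^{(j)}_{u,p}$ for all $\lambda$, and the operator norm of the identity embedding $\mathcal{X}^{(j)}_{u,p}(\mathbb{Z}^d)\hookrightarrow \ell_{u'}(\mathbb{Z}^d)$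 equals exactly $1$. -/
open scoped ENNReal NNReal BigOperators
open Filter

/-- The unit cube `Q_{0,k}` is contained in the dyadic cube `Q_{-j,m}` of side length `2^j`. -/
def inDyadic (d j : ℕ) (m k : Fin d → ℤ) : Prop :=
  ∀ i, 2 ^ j * m i ≤ k i ∧ k i < 2 ^ j * (m i + 1)


private lemma ediv_eq_of_bounds {b m k : ℤ} (hb : 0 < b) (h1 : b*m ≤ k) (h2 : k < b*(m+1)) :
    k / b = m := by
  have h3 := Int.mul_ediv_add_emod k b
  have h4 := Int.emod_nonneg k hb.ne'
  have h5 := Int.emod_lt_of_pos k hb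
  have hA : m < k / b + 1 := lt_of_mul_lt_mul_left (by nlinarith) hb.le
  have hB : k / b < m + 1 := lt_of_mul_lt_mul_left (by nlinarith) hb.le
  omega

lemma inDyadic_iff {d j : ℕ} {m k : Fin d → ℤ} :
    inDyadic d j m k ↔ (fun i => k i / (2^j : ℤ)) = m := by
  have hb : (0:ℤ) < 2^j := by positivity
  constructor
  · intro h; funext i
    exact ediv_eq_of_bounds hb (h i).1 (h i).2
  · rintro rfl i
    have h3 := Int.mul_ediv_add_emod (k i) (2^j)
    have h4 := Int.emod_nonneg (k i) hb.ne'
    have h5 := Int.emod_lt_of_pos (k i) hb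
    constructor <;> nlinarith

def cubeEquiv (d j : ℕ) (m : Fin d → ℤ) :
    {k : Fin d → ℤ // inDyadic d j m k} ≃ (Fin d → Fin (2^j)) where
  toFun k i := ⟨(k.1 i - 2^j * m i).toNat, by
    have h := k.2 i
    have h1 : (0:ℤ) ≤ k.1 i - 2^j*m i := by linarith [h.1]
    have h2 : k.1 i - 2^j*m i < (2:ℤ)^j := by nlinarith [h.2]
    have : ((2^j : ℕ) : ℤ) = (2:ℤ)^j := by push_cast; ring
    omega⟩
  invFun v := ⟨fun i => 2^j * m i + (v i : ℤ), by
    intro i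
    have h1 : ((v i : ℕ) : ℤ) < (2:ℤ)^j := by
      have := (v i).isLt
      have hc : ((2^j : ℕ) : ℤ) = (2:ℤ)^j := by push_cast; ring
      omega
    have h2 : (2:ℤ)^j * (m i + 1) = 2^j * m i + 2^j := by ring
    constructor
    · simp
    · show 2^j * m i + ((v i : ℕ) : ℤ) < 2^j * (m i + 1)
      linarith⟩
  left_inv k := by
    ext i
    simp only []
    have h := k.2 i
    have h1 : (0:ℤ) ≤ k.1 i - 2^j*m i := by linarith [h.1]
    rw [Int.toNat_of_nonneg h1]
    try ring
  right_inv v := by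
    funext i
    ext
    simp

instance (d j : ℕ) (m : Fin d → ℤ) : Fintype {k : Fin d → ℤ // inDyadic d j m k} :=
  Fintype.ofEquiv _ (cubeEquiv d j m).symm

lemma card_cube (d j : ℕ) (m : Fin d → ℤ) :
    (Fintype.card {k : Fin d → ℤ // inDyadic d j m k} : ℝ≥0∞) = (2:ℝ≥0∞) ^ (j*d) := by
  rw [Fintype.card_congr (cubeEquiv d j m)]
  rw [Fintype.card_fun, Fintype.card_fin, Fintype.card_fin, ← pow_mul]
  push_cast
  ring

lemma tsum_partition (d j : ℕ) (g : (Fin d → ℤ) → ℝ≥0∞) :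
    ∑' k, g k = ∑' (m : Fin d → ℤ), ∑' k : {k : Fin d → ℤ // inDyadic d j m k}, g k.1 := by
  classical
  let e : (Σ m : Fin d → ℤ, {k : Fin d → ℤ // inDyadic d j m k}) ≃ (Fin d → ℤ) :=
    (Equiv.sigmaCongrRight fun m => Equiv.subtypeEquivRight (fun k => inDyadic_iff)).trans
      (Equiv.sigmaFiberEquiv fun (k : Fin d → ℤ) (i : Fin d) => k i / 2^j)
  calc ∑' k, g k = ∑' x : Σ m : Fin d → ℤ, {k : Fin d → ℤ // inDyadic d j m k}, g (e x) :=
        (e.tsum_eq g).symm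
    _ = _ := by rw [ENNReal.tsum_sigma']; rfl

lemma sum_le_rpow_mean {ι : Type*} [Fintype ι] (g : ι → ℝ≥0∞) {t : ℝ} (ht : 1 ≤ t) :
    ∑' i, g i ≤ (Fintype.card ι : ℝ≥0∞) ^ (1 - 1/t) * (∑' i, g i ^ t) ^ (1/t) := by
  have ht0 : t ≠ 0 := by positivity
  rw [tsum_fintype, tsum_fintype]
  have h := ENNReal.rpow_sum_le_const_mul_sum_rpow Finset.univ g ht
  have h2 := ENNReal.rpow_le_rpow h (by positivity : (0:ℝ) ≤ 1/t)
  rwa [← ENNReal.rpow_mul, mul_one_div_cancel ht0, ENNReal.rpow_one,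
    ENNReal.mul_rpow_of_nonneg _ _ (by positivity : (0:ℝ) ≤ 1/t), ← ENNReal.rpow_mul,
    show (t-1) * (1/t) = 1 - 1/t by field_simp, Finset.card_univ] at h2

lemma rpow_split (x : ℝ≥0∞) {q : ℝ} (hq : 1 ≤ q) : x ^ q = x ^ (q-1) * x := by
  have h := ENNReal.rpow_add_of_nonneg (x := x) (q-1) 1 (by linarith) zero_le_one
  rw [show q - 1 + 1 = q by ring, ENNReal.rpow_one] at h
  exact h

lemma tsum_rpow_le {ι : Type*} (a : ι → ℝ≥0∞) {q : ℝ} (hq : 1 ≤ q) :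
    ∑' i, a i ^ q ≤ (∑' i, a i) ^ q := by
  have hq0 : (0:ℝ) < q := by linarith
  rcases eq_or_ne (∑' i, a i) ⊤ with hT | hT
  · rw [hT, ENNReal.top_rpow_of_pos hq0]; exact le_top
  calc ∑' i, a i ^ q ≤ ∑' i, (∑' i, a i) ^ (q-1) * a i := by
        refine ENNReal.tsum_le_tsum fun i => ?_
        rw [rpow_split (a i) hq]
        exact mul_le_mul_left (ENNReal.rpow_le_rpow (ENNReal.le_tsum i) (by linarith)) _
    _ = (∑' i, a i) ^ (q-1) * (∑' i, a i) := ENNReal.tsum_mul_left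
    _ = (∑' i, a i) ^ q := (rpow_split _ hq).symm

/-- The Morrey sequence space quasi-norm `‖λ | m_{u,p}(ℤ^d)‖`, with values in `ℝ≥0∞`. -/
noncomputable def morreyNorm (d : ℕ) (u p : ℝ) (lam : (Fin d → ℤ) → ℂ) : ℝ≥0∞ :=
  ⨆ (j : ℕ) (m : Fin d → ℤ),
    ((2 : ℝ≥0∞) ^ (j * d)) ^ (1 / u - 1 / p) *
      (∑' k : {k : Fin d → ℤ // inDyadic d j m k}, (‖lam k.1‖₊ : ℝ≥0∞) ^ p) ^ (1 / p)

/-- The `ℓ_r(ℤ^d)` norm. -/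
noncomputable def lpNorm (d : ℕ) (r : ℝ) (lam : (Fin d → ℤ) → ℂ) : ℝ≥0∞ :=
  (∑' k : Fin d → ℤ, (‖lam k‖₊ : ℝ≥0∞) ^ r) ^ (1 / r)

/-- The `ℓ_∞(ℤ^d)` norm. -/
noncomputable def lInftyNorm (d : ℕ) (lam : (Fin d → ℤ) → ℂ) : ℝ≥0∞ :=
  ⨆ k : Fin d → ℤ, (‖lam k‖₊ : ℝ≥0∞)

/-- The weak Lorentz `ℓ_{u,∞}(ℤ^d)` norm, via the distribution function. -/
noncomputable def weakNorm (d : ℕ) (u : ℝ) (lam : (Fin d → ℤ) → ℂ) : ℝ≥0∞ :=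
  ⨆ t : ℝ≥0, (t : ℝ≥0∞) *
    (∑' _ : {k : Fin d → ℤ // (t : ℝ) < ‖lam k‖}, (1 : ℝ≥0∞)) ^ (1 / u)

/-- The norm of the level-`j` space `X^{(j)}_{u,p}(ℤ^d)`. -/
noncomputable def XjNorm (d : ℕ) (u p p' : ℝ) (j : ℕ) (lam : (Fin d → ℤ) → ℂ) : ℝ≥0∞ :=
  ((2 : ℝ≥0∞) ^ (j * d)) ^ (1 / p - 1 / u) *
    ∑' m : Fin d → ℤ,
      (∑' k : {k : Fin d → ℤ // inDyadic d j m k}, (‖lam k.1‖₊ : ℝ≥0∞) ^ p') ^ (1 / p')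

/-- The norm of `X_{u,p}(ℤ^d)`: infimum over decompositions `λ = ∑_j λ^{(j)}`. -/
noncomputable def XupNorm (d : ℕ) (u p p' : ℝ) (lam : (Fin d → ℤ) → ℂ) : ℝ≥0∞ :=
  ⨅ (L : ℕ → (Fin d → ℤ) → ℂ) (_ : ∀ k, HasSum (fun j => L j k) (lam k)),
    ∑' j : ℕ, XjNorm d u p p' j (L j)

/-- Membership in `m_{u,p}(ℤ^d)`. -/
def MemMorrey (d : ℕ) (u p : ℝ) (lam : (Fin d → ℤ) → ℂ) : Prop :=
  morreyNorm d u p lam ≠ ⊤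

/-- Membership in `m^{00}_{u,p}(ℤ^d)`, the closure of the finitely supported sequences. -/
def MemMorrey00 (d : ℕ) (u p : ℝ) (lam : (Fin d → ℤ) → ℂ) : Prop :=
  MemMorrey d u p lam ∧
    ∀ ε : ℝ≥0∞, 0 < ε → ∃ mu : (Fin d → ℤ) → ℂ,
      (Function.support mu).Finite ∧ morreyNorm d u p (lam - mu) < ε

/-- `Q_{-ν,m} ⊆ Q_{-j,0}` for dyadic cubes. -/
def subCube (d j ν : ℕ) (m : Fin d → ℤ) : Prop :=
  ν ≤ j ∧ ∀ i, 0 ≤ m i ∧ 2 ^ ν * (m i + 1) ≤ 2 ^ j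

/-- Norm of the finite-dimensional Morrey space `m^{2^{jd}}_{u,p}` on the cube `Q_{-j,0}`. -/
noncomputable def finMorreyNorm (d : ℕ) (u p : ℝ) (j : ℕ) (lam : (Fin d → ℤ) → ℂ) : ℝ≥0∞ :=
  ⨆ (ν : ℕ) (m : Fin d → ℤ) (_ : subCube d j ν m),
    ((2 : ℝ≥0∞) ^ (ν * d)) ^ (1 / u - 1 / p) *
      (∑' k : {k : Fin d → ℤ // inDyadic d ν m k}, (‖lam k.1‖₊ : ℝ≥0∞) ^ p) ^ (1 / p)

/-- Operator norm of `id_j : m^{2^{jd}}_{u₁,p₁} → m^{2^{jd}}_{u₂,p₂}`. -/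
noncomputable def morreyOpNorm (d : ℕ) (u₁ p₁ u₂ p₂ : ℝ) (j : ℕ) : ℝ≥0∞ :=
  ⨆ (lam : (Fin d → ℤ) → ℂ) (_ : finMorreyNorm d u₁ p₁ j lam ≤ 1),
    finMorreyNorm d u₂ p₂ j lam

theorem Xj_eq_l1_and_embeds_lu' (d : ℕ) (u p p' u' : ℝ)
    (hp : 1 ≤ p) (hpu : p < u) (hp'pos : 0 < p') (hp' : 1 / p + 1 / p' = 1)
    (hu' : 1 / u + 1 / u' = 1) (j : ℕ) :
    (∀ lam : (Fin d → ℤ) → ℂ,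
        ((2 : ℝ≥0∞) ^ (j * d)) ^ (-(1 / u)) * lpNorm d 1 lam ≤ XjNorm d u p p' j lam ∧
        XjNorm d u p p' j lam ≤ ((2 : ℝ≥0∞) ^ (j * d)) ^ (1 / p - 1 / u) * lpNorm d 1 lam) ∧
    (∀ lam : (Fin d → ℤ) → ℂ, lpNorm d u' lam ≤ XjNorm d u p p' j lam) ∧
    (∀ C : ℝ≥0∞, (∀ lam : (Fin d → ℤ) → ℂ, lpNorm d u' lam ≤ C * XjNorm d u p p' j lam) →
      1 ≤ C) := by
  classical
  have hp'invpos : (0:ℝ) < 1/p' := one_div_pos.2 hp'pos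
  have hppos : (0:ℝ) < p := by linarith
  have hu1 : 1 < u := lt_of_le_of_lt hp hpu
  have hupos : (0:ℝ) < u := by linarith
  have hp1 : 1 < p := by
    rcases eq_or_lt_of_le hp with h | h
    · exfalso; rw [← h] at hp'; linarith
    · exact h
  have hpinvpos : (0:ℝ) < 1/p := by positivity
  have huinvpos : (0:ℝ) < 1/u := by positivity
  have hpinv1 : 1/p < 1 := by rw [div_lt_one hppos]; exact hp1
  have huinv1 : 1/u < 1 := by rw [div_lt_one hupos]; exact hu1
  have hu'pos : (0:ℝ) < u' := one_div_pos.1 (by linarith)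
  have hu'1 : 1 < u' := (div_lt_one hu'pos).1 (by linarith)
  have hp'1 : 1 < p' := (div_lt_one hp'pos).1 (by linarith)
  have hup' : u' < p' := by
    have h1 : 1/u < 1/p := one_div_lt_one_div_of_lt hppos hpu
    exact lt_of_one_div_lt_one_div hp'pos (by linarith)
  have hp'ne : p' ≠ 0 := ne_of_gt hp'pos
  have hu'ne : u' ≠ 0 := ne_of_gt hu'pos
  have hpp' : 1 - 1/p' = 1/p := by linarith
  have hA0 : ((2:ℝ≥0∞) ^ (j*d)) ≠ 0 := pow_ne_zero _ (by norm_num)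
  have hAtop : ((2:ℝ≥0∞) ^ (j*d)) ≠ ⊤ := ENNReal.pow_ne_top ENNReal.ofNat_ne_top
  have hu'inv : u' * (1/u') = 1 := mul_one_div_cancel hu'ne
  have heb : (1 - u'/p') * (1/u') = 1/p - 1/u := by
    have h3 : u'/p' * (1/u') = 1/p' := by
      field_simp
    nlinarith [h3]
  have hup2 : u' * (p'/u') = p' := by field_simp
  refine ⟨fun lam => ⟨?_, ?_⟩, fun lam => ?_, fun C hC => ?_⟩
  · -- (a) lower bound
    have hH : ∀ m : Fin d → ℤ,
        (∑' k : {k : Fin d → ℤ // inDyadic d j m k}, (‖lam k.1‖₊ : ℝ≥0∞))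
          ≤ ((2:ℝ≥0∞) ^ (j*d)) ^ (1/p) *
            (∑' k : {k : Fin d → ℤ // inDyadic d j m k}, (‖lam k.1‖₊ : ℝ≥0∞) ^ p') ^ (1/p') := by
      intro m
      have h := sum_le_rpow_mean
        (fun k : {k : Fin d → ℤ // inDyadic d j m k} => (‖lam k.1‖₊ : ℝ≥0∞)) hp'1.le
      rwa [card_cube d j m, hpp'] at h
    unfold lpNorm XjNorm
    rw [show ((1:ℝ)/1) = 1 by norm_num, ENNReal.rpow_one]
    simp only [ENNReal.rpow_one]
    calc ((2:ℝ≥0∞) ^ (j*d)) ^ (-(1/u)) * ∑' k, (‖lam k‖₊ : ℝ≥0∞)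
        = ((2:ℝ≥0∞) ^ (j*d)) ^ (-(1/u)) *
            ∑' m : Fin d → ℤ, ∑' k : {k : Fin d → ℤ // inDyadic d j m k}, (‖lam k.1‖₊ : ℝ≥0∞) := by
          rw [tsum_partition d j (fun k => ((‖lam k‖₊ : ℝ≥0∞)))]
      _ ≤ ((2:ℝ≥0∞) ^ (j*d)) ^ (-(1/u)) *
            ∑' m : Fin d → ℤ, ((2:ℝ≥0∞) ^ (j*d)) ^ (1/p) *
              (∑' k : {k : Fin d → ℤ // inDyadic d j m k}, (‖lam k.1‖₊ : ℝ≥0∞) ^ p') ^ (1/p') :=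
          mul_le_mul_right (ENNReal.tsum_le_tsum hH) _
      _ = _ := by
          rw [ENNReal.tsum_mul_left, ← mul_assoc, ← ENNReal.rpow_add _ _ hA0 hAtop,
            show -(1/u) + 1/p = 1/p - 1/u from by ring]
  · -- (a) upper bound
    have ham : ∀ m : Fin d → ℤ,
        (∑' k : {k : Fin d → ℤ // inDyadic d j m k}, (‖lam k.1‖₊ : ℝ≥0∞) ^ p') ^ (1/p')
          ≤ ∑' k : {k : Fin d → ℤ // inDyadic d j m k}, (‖lam k.1‖₊ : ℝ≥0∞) := by
      intro m
      have h1 := tsum_rpow_le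
        (fun k : {k : Fin d → ℤ // inDyadic d j m k} => (‖lam k.1‖₊ : ℝ≥0∞)) hp'1.le
      have h2 := ENNReal.rpow_le_rpow h1 (le_of_lt hp'invpos)
      rwa [← ENNReal.rpow_mul, mul_one_div_cancel hp'ne, ENNReal.rpow_one] at h2
    unfold lpNorm XjNorm
    rw [show ((1:ℝ)/1) = 1 by norm_num, ENNReal.rpow_one]
    simp only [ENNReal.rpow_one]
    refine mul_le_mul_right ?_ _
    rw [tsum_partition d j (fun k => ((‖lam k‖₊ : ℝ≥0∞)))]
    exact ENNReal.tsum_le_tsum ham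
  · -- (b) embedding into ℓ_{u'}
    have hb1 : ∀ m : Fin d → ℤ,
        (∑' k : {k : Fin d → ℤ // inDyadic d j m k}, (‖lam k.1‖₊ : ℝ≥0∞) ^ u')
          ≤ ((2:ℝ≥0∞) ^ (j*d)) ^ (1 - u'/p') *
            ((∑' k : {k : Fin d → ℤ // inDyadic d j m k}, (‖lam k.1‖₊ : ℝ≥0∞) ^ p') ^ (1/p')) ^ u' := by
      intro m
      have ht : (1:ℝ) ≤ p'/u' := (one_le_div hu'pos).2 hup'.le
      have h := sum_le_rpow_mean
        (fun k : {k : Fin d → ℤ // inDyadic d j m k} => (‖lam k.1‖₊ : ℝ≥0∞) ^ u') ht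
      rw [card_cube d j m] at h
      simp_rw [← ENNReal.rpow_mul] at h
      rw [hup2, one_div_div] at h
      rwa [← ENNReal.rpow_mul, show 1/p' * u' = u'/p' from by ring]
    have hmain : (∑' k : Fin d → ℤ, (‖lam k‖₊ : ℝ≥0∞) ^ u')
        ≤ ((2:ℝ≥0∞) ^ (j*d)) ^ (1 - u'/p') *
          (∑' m : Fin d → ℤ,
            (∑' k : {k : Fin d → ℤ // inDyadic d j m k}, (‖lam k.1‖₊ : ℝ≥0∞) ^ p') ^ (1/p')) ^ u' := by
      rw [tsum_partition d j (fun k => (‖lam k‖₊ : ℝ≥0∞) ^ u')]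
      calc ∑' m : Fin d → ℤ, ∑' k : {k : Fin d → ℤ // inDyadic d j m k}, (‖lam k.1‖₊ : ℝ≥0∞) ^ u'
          ≤ ∑' m : Fin d → ℤ, ((2:ℝ≥0∞) ^ (j*d)) ^ (1 - u'/p') *
              ((∑' k : {k : Fin d → ℤ // inDyadic d j m k}, (‖lam k.1‖₊ : ℝ≥0∞) ^ p') ^ (1/p')) ^ u' :=
            ENNReal.tsum_le_tsum hb1
        _ = ((2:ℝ≥0∞) ^ (j*d)) ^ (1 - u'/p') *
              ∑' m : Fin d → ℤ,
                ((∑' k : {k : Fin d → ℤ // inDyadic d j m k}, (‖lam k.1‖₊ : ℝ≥0∞) ^ p') ^ (1/p')) ^ u' :=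
            ENNReal.tsum_mul_left
        _ ≤ _ := mul_le_mul_right (tsum_rpow_le _ hu'1.le) _
    have h2 := ENNReal.rpow_le_rpow hmain (le_of_lt (one_div_pos.2 hu'pos))
    rw [ENNReal.mul_rpow_of_nonneg _ _ (le_of_lt (one_div_pos.2 hu'pos)),
      ← ENNReal.rpow_mul, ← ENNReal.rpow_mul, heb, hu'inv, ENNReal.rpow_one] at h2
    unfold lpNorm XjNorm
    exact h2
  · -- (c) sharpness
    set lam0 : (Fin d → ℤ) → ℂ := fun k => if inDyadic d j 0 k then 1 else 0 with hlam0
    have huniq : ∀ (m : Fin d → ℤ) (k : {k : Fin d → ℤ // inDyadic d j m k}),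
        inDyadic d j 0 k.1 → m = 0 := by
      intro m k h
      have h1 := inDyadic_iff.1 h
      have h2 := inDyadic_iff.1 k.2
      rw [← h2]; exact h1
    have hcube : ∀ (e : ℝ), 0 < e → ∀ m : Fin d → ℤ,
        (∑' k : {k : Fin d → ℤ // inDyadic d j m k}, (‖lam0 k.1‖₊ : ℝ≥0∞) ^ e)
          = if m = 0 then (2:ℝ≥0∞) ^ (j*d) else 0 := by
      intro e he m
      by_cases hm : m = 0
      · subst hm
        rw [if_pos rfl]
        have hval : ∀ k : {k : Fin d → ℤ // inDyadic d j 0 k},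
            (‖lam0 k.1‖₊ : ℝ≥0∞) ^ e = 1 := by
          intro k
          simp [hlam0, k.2]
        rw [tsum_congr hval, tsum_fintype]
        simp only [Finset.sum_const, Finset.card_univ, nsmul_eq_mul, mul_one]
        exact card_cube d j 0
      · rw [if_neg hm]
        have hval : ∀ k : {k : Fin d → ℤ // inDyadic d j m k},
            (‖lam0 k.1‖₊ : ℝ≥0∞) ^ e = 0 := by
          intro k
          have hnot : ¬ inDyadic d j 0 k.1 := fun h => hm (huniq m k h)
          simp [hlam0, hnot, ENNReal.zero_rpow_of_pos he]
        rw [tsum_congr hval]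
        simp
    have hlpv : lpNorm d u' lam0 = ((2:ℝ≥0∞) ^ (j*d)) ^ (1/u') := by
      unfold lpNorm
      rw [tsum_partition d j (fun k => (‖lam0 k‖₊ : ℝ≥0∞) ^ u'),
        tsum_congr (hcube u' hu'pos), tsum_ite_eq]
    have hXjv : XjNorm d u p p' j lam0 = ((2:ℝ≥0∞) ^ (j*d)) ^ (1/u') := by
      unfold XjNorm
      rw [tsum_congr (fun m => by rw [hcube p' hp'pos m] :
        ∀ m : Fin d → ℤ,
          (∑' k : {k : Fin d → ℤ // inDyadic d j m k}, (‖lam0 k.1‖₊ : ℝ≥0∞) ^ p') ^ (1/p')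
            = (if m = 0 then (2:ℝ≥0∞) ^ (j*d) else 0) ^ (1/p'))]
      have hsplit : ∀ m : Fin d → ℤ,
          ((if m = 0 then (2:ℝ≥0∞) ^ (j*d) else 0) ^ (1/p'))
            = if m = 0 then ((2:ℝ≥0∞) ^ (j*d)) ^ (1/p') else 0 := by
        intro m; split_ifs with h
        · rfl
        · exact ENNReal.zero_rpow_of_pos hp'invpos
      rw [tsum_congr hsplit, tsum_ite_eq, ← ENNReal.rpow_add _ _ hA0 hAtop,
        show 1/p - 1/u + 1/p' = 1/u' from by linarith]
    have h := hC lam0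
    rw [hlpv, hXjv] at h
    have hx0 : ((2:ℝ≥0∞) ^ (j*d)) ^ ((1:ℝ)/u') ≠ 0 :=
      (ENNReal.rpow_pos (pos_iff_ne_zero.2 hA0) hAtop).ne'
    have hxtop : ((2:ℝ≥0∞) ^ (j*d)) ^ ((1:ℝ)/u') ≠ ⊤ :=
      ENNReal.rpow_ne_top_of_nonneg (le_of_lt (one_div_pos.2 hu'pos)) hAtop
    have h' : 1 * ((2:ℝ≥0∞) ^ (j*d)) ^ ((1:ℝ)/u') ≤ C * ((2:ℝ≥0∞) ^ (j*d)) ^ ((1:ℝ)/u') := by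
      rw [one_mul]; exact h
    exact (ENNReal.mul_le_mul_iff_left hx0 hxtop).1 h'
end

section
/- Let $1\le p<u<\infty$ and $1/u+1/u'=1$. Then $\ell_1(\mathbb{Z}^d)\hookrightarrow \mathcal{X}_{u,p}(\mathbb{Z}^d)\hookrightarrow \ell_{u'}(\mathbb{Z}^d)$, and both embedding operators have operator norm exactly $1$: $\|\lambda\,|\,\mathcal{X}_{u,p}\|\le\|\lambda\,|\,\ell_1\|$ and $\|\lambda\,|\,\ell_{u'}\|\le\|\lambda\,|\,\mathcal{X}_{u,p}\|$ for all sequences $\lambda$, with both bounds sharp. -/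
open scoped ENNReal NNReal BigOperators
open Filter

section Aux
open MeasureTheory

private lemma iSup_rpow' {ι : Sort*} {q : ℝ} (hq : 0 < q) (f : ι → ℝ≥0∞) :
    (⨆ i, f i) ^ q = ⨆ i, f i ^ q := by
  have h1 : (⨆ i, f i) ≤ (⨆ i, f i ^ q) ^ (1/q) := iSup_le fun i => by
    have h2 : f i = (f i ^ q) ^ (1/q) := by
      rw [← ENNReal.rpow_mul, mul_one_div_cancel hq.ne', ENNReal.rpow_one]
    rw [h2]
    exact ENNReal.rpow_le_rpow (le_iSup (fun i => f i ^ q) i) (by positivity)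
  refine le_antisymm ?_ (iSup_le fun i => ENNReal.rpow_le_rpow (le_iSup f i) hq.le)
  calc (⨆ i, f i) ^ q ≤ ((⨆ i, f i ^ q) ^ (1/q)) ^ q := ENNReal.rpow_le_rpow h1 hq.le
    _ = ⨆ i, f i ^ q := by
        rw [← ENNReal.rpow_mul, one_div_mul_cancel hq.ne', ENNReal.rpow_one]

private lemma rpow_tsum_le' {α : Type*} {q : ℝ} (hq0 : 0 < q) (hq1 : q ≤ 1) (x : α → ℝ≥0∞) :
    (∑' m, x m) ^ q ≤ ∑' m, x m ^ q := by
  have hfin : ∀ s : Finset α, (∑ m ∈ s, x m) ^ q ≤ ∑ m ∈ s, x m ^ q := by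
    intro s
    induction s using Finset.cons_induction with
    | empty => simp [ENNReal.zero_rpow_of_pos hq0]
    | cons a s ha ih =>
      rw [Finset.sum_cons, Finset.sum_cons]
      exact (ENNReal.rpow_add_le_add_rpow _ _ hq0.le hq1).trans (add_le_add_right ih _)
  rw [ENNReal.tsum_eq_iSup_sum, iSup_rpow' hq0]
  exact iSup_le fun s => (hfin s).trans (ENNReal.sum_le_tsum s)

private lemma minkowski_tsum' {α : Type*} [Countable α] [MeasurableSpace α]
    [MeasurableSingletonClass α] {r : ℝ} (hr : 1 ≤ r) (a : ℕ → α → ℝ≥0∞) :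
    (∑' k, (∑' j, a j k) ^ r) ^ (1 / r) ≤ ∑' j, (∑' k, a j k ^ r) ^ (1 / r) := by
  have hr0 : (0:ℝ) < r := lt_of_lt_of_le one_pos hr
  have hr0' : (0:ℝ) < 1 / r := by positivity
  have hfin : ∀ J : Finset ℕ,
      (∫⁻ k, (∑ j ∈ J, a j) k ^ r ∂Measure.count) ^ (1/r) ≤
        ∑ j ∈ J, (∫⁻ k, a j k ^ r ∂Measure.count) ^ (1/r) := by
    intro J
    induction J using Finset.cons_induction with
    | empty => simp [ENNReal.zero_rpow_of_pos, hr0, hr0']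
    | cons b J hb ih =>
      rw [Finset.sum_cons, Finset.sum_cons]
      exact (ENNReal.lintegral_Lp_add_le (measurable_of_countable _).aemeasurable
        (measurable_of_countable _).aemeasurable hr).trans (add_le_add_right ih _)
  have hmono : Monotone (fun J : Finset ℕ => fun k => ((∑ j ∈ J, a j) k) ^ r) := by
    intro J J' hJ k
    simp only [Finset.sum_apply]
    exact ENNReal.rpow_le_rpow (Finset.sum_le_sum_of_subset hJ) hr0.le
  have key : ∀ k : α, (∑' j, a j k) ^ r = ⨆ J : Finset ℕ, ((∑ j ∈ J, a j) k) ^ r := by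
    intro k
    rw [ENNReal.tsum_eq_iSup_sum, iSup_rpow' hr0]
    simp
  calc (∑' k, (∑' j, a j k) ^ r) ^ (1/r)
      = (∫⁻ k, ⨆ J : Finset ℕ, ((∑ j ∈ J, a j) k) ^ r ∂Measure.count) ^ (1/r) := by
        rw [lintegral_count]
        congr 1
        exact tsum_congr key
    _ = (⨆ J : Finset ℕ, ∫⁻ k, ((∑ j ∈ J, a j) k) ^ r ∂Measure.count) ^ (1/r) := by
        rw [lintegral_iSup_directed (fun J => (measurable_of_countable _).aemeasurable)
          hmono.directed_le]
    _ = ⨆ J : Finset ℕ, (∫⁻ k, ((∑ j ∈ J, a j) k) ^ r ∂Measure.count) ^ (1/r) :=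
        iSup_rpow' hr0' _
    _ ≤ ∑' j, (∫⁻ k, a j k ^ r ∂Measure.count) ^ (1/r) :=
        iSup_le fun J => (hfin J).trans (ENNReal.sum_le_tsum J)
    _ = ∑' j, (∑' k, a j k ^ r) ^ (1/r) := by
        simp [lintegral_count]

private lemma inDyadic_self (d j : ℕ) (k : Fin d → ℤ) :
    inDyadic d j (fun i => k i / 2 ^ j) k := by
  intro i
  have h2 : (0:ℤ) < 2 ^ j := by positivity
  have h1 := Int.mul_ediv_add_emod (k i) (2 ^ j)
  have h3 := Int.emod_nonneg (k i) h2.ne'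
  have h4 := Int.emod_lt_of_pos (k i) h2
  constructor
  · linarith
  · rw [mul_add, mul_one]; linarith

private lemma inDyadic_unique {d j : ℕ} {m k : Fin d → ℤ} (h : inDyadic d j m k) :
    (fun i => k i / 2 ^ j) = m := by
  funext i
  obtain ⟨h1, h2⟩ := h i
  have h2' : k i - 2 ^ j * m i < 2 ^ j := by rw [mul_add, mul_one] at h2; linarith
  have hne : ((2:ℤ) ^ j) ≠ 0 := by positivity
  have hcalc : ((k i - 2 ^ j * m i) + 2 ^ j * m i) / 2 ^ j = m i := by
    rw [Int.add_mul_ediv_left _ _ hne, Int.ediv_eq_zero_of_lt (by linarith) h2', zero_add]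
  rw [sub_add_cancel] at hcalc
  exact hcalc

private def dyadicEquiv (d j : ℕ) :
    (Fin d → ℤ) ≃ Σ m : Fin d → ℤ, {k : Fin d → ℤ // inDyadic d j m k} where
  toFun k := ⟨fun i => k i / 2 ^ j, ⟨k, inDyadic_self d j k⟩⟩
  invFun x := x.2.1
  left_inv k := rfl
  right_inv := by
    rintro ⟨m, k, h⟩
    have hm := inDyadic_unique h
    subst hm
    rfl

private lemma tsum_dyadic (d j : ℕ) (f : (Fin d → ℤ) → ℝ≥0∞) :
    ∑' k, f k = ∑' (m : Fin d → ℤ), ∑' k : {k : Fin d → ℤ // inDyadic d j m k}, f k.1 := by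
  calc ∑' k, f k
      = ∑' x : Σ m : Fin d → ℤ, {k : Fin d → ℤ // inDyadic d j m k}, f x.2.1 :=
        (dyadicEquiv d j).tsum_eq (fun x => f x.2.1)
    _ = _ := ENNReal.tsum_sigma' _

private def cubeFinEquiv (d j : ℕ) (m : Fin d → ℤ) :
    {k : Fin d → ℤ // inDyadic d j m k} ≃ (Fin d → Fin (2 ^ j)) where
  toFun x i := ⟨(x.1 i - 2 ^ j * m i).toNat, by
    obtain ⟨h1, h2⟩ := x.2 i
    rw [Int.toNat_lt' (by positivity)]
    rw [mul_add, mul_one] at h2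
    push_cast
    linarith⟩
  invFun f := ⟨fun i => 2 ^ j * m i + (f i : ℤ), by
    intro i
    dsimp only
    constructor
    · exact le_add_of_nonneg_right (by positivity)
    · have h5 : ((f i : ℕ) : ℤ) < (2:ℤ) ^ j := by exact_mod_cast (f i).isLt
      rw [mul_add, mul_one]
      exact add_lt_add_right h5 _⟩
  left_inv x := by
    apply Subtype.ext
    funext i
    have h1 := (x.2 i).1
    simp only
    rw [Int.toNat_of_nonneg (by linarith)]
    ring
  right_inv f := by
    funext i
    apply Fin.ext
    simp

end Aux

private lemma jensen_fin {ι : Type*} [Fintype ι] [Nonempty ι] {P u' p' : ℝ} (hP : 1 ≤ P)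
    (hu' : 0 < u') (hp'0 : 0 < p') (hup : u' * P = p') (a : ι → ℝ≥0∞) (ha : ∀ i, a i ≠ ⊤) :
    (∑' i, a i ^ u') ^ (1/u') ≤
      (Fintype.card ι : ℝ≥0∞) ^ (1/u' - 1/p') * (∑' i, a i ^ p') ^ (1/p') := by
  have hP0 : (0:ℝ) < P := lt_of_lt_of_le one_pos hP
  set n : ℝ≥0∞ := (Fintype.card ι : ℝ≥0∞) with hn
  have hn0 : n ≠ 0 := by simp [hn, Fintype.card_ne_zero]
  have hnt : n ≠ ⊤ := by simp [hn]
  set S : ℝ≥0∞ := ∑' i, a i ^ u' with hS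
  set T : ℝ≥0∞ := ∑' i, a i ^ p' with hT
  have hTt : T ≠ ⊤ := by
    rw [hT, tsum_fintype]
    exact (ENNReal.sum_lt_top.mpr
      (fun i _ => ENNReal.rpow_lt_top_of_nonneg hp'0.le (ha i))).ne
  have hw : ∑ _i : ι, n⁻¹ = (1:ℝ≥0∞) := by
    rw [Finset.sum_const, Finset.card_univ, nsmul_eq_mul, ENNReal.mul_inv_cancel hn0 hnt]
  have h := ENNReal.rpow_arith_mean_le_arith_mean_rpow Finset.univ (fun _ => n⁻¹)
    (fun i => a i ^ u') hw hP
  rw [← Finset.mul_sum, ← Finset.mul_sum] at h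
  simp_rw [← ENNReal.rpow_mul, hup] at h
  rw [← tsum_fintype (L := .unconditional _), ← tsum_fintype (L := .unconditional _), ← hS, ← hT] at h
  have h2 : n⁻¹ * S ≤ (n⁻¹ * T) ^ (1/P) := by
    have h2' := ENNReal.rpow_le_rpow h (by positivity : (0:ℝ) ≤ 1/P)
    rwa [← ENNReal.rpow_mul, mul_one_div_cancel hP0.ne', ENNReal.rpow_one] at h2'
  have h3 : S ≤ n * (n⁻¹ * T) ^ (1/P) := by
    calc S = n * (n⁻¹ * S) := by rw [← mul_assoc, ENNReal.mul_inv_cancel hn0 hnt, one_mul]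
      _ ≤ n * (n⁻¹ * T) ^ (1/P) := mul_le_mul_right h2 n
  have hPu : (1/P) * (1/u') = 1/p' := by
    rw [one_div_mul_one_div, mul_comm P u', hup]
  have hnit : n⁻¹ ≠ ⊤ := ENNReal.inv_ne_top.mpr hn0
  calc S ^ (1/u')
      ≤ (n * (n⁻¹ * T) ^ (1/P)) ^ (1/u') := ENNReal.rpow_le_rpow h3 (by positivity)
    _ = n ^ (1/u') * ((n⁻¹ * T) ^ (1/P)) ^ (1/u') :=
        ENNReal.mul_rpow_of_ne_top hnt
          (ENNReal.rpow_ne_top_of_nonneg (by positivity) (ENNReal.mul_ne_top hnit hTt)) _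
    _ = n ^ (1/u') * (n⁻¹ * T) ^ (1/p') := by rw [← ENNReal.rpow_mul, hPu]
    _ = n ^ (1/u') * (n⁻¹ ^ (1/p') * T ^ (1/p')) := by
        rw [ENNReal.mul_rpow_of_ne_top hnit hTt]
    _ = (n ^ (1/u') * (n ^ (1/p'))⁻¹) * T ^ (1/p') := by rw [ENNReal.inv_rpow]; ring
    _ = n ^ (1/u' - 1/p') * T ^ (1/p') := by
        rw [sub_eq_add_neg, ENNReal.rpow_add _ _ hn0 hnt, ENNReal.rpow_neg]

private lemma lpNorm_le_XjNorm (d j : ℕ) {u p p' u' : ℝ}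
    (hu'1 : 1 ≤ u') (hu'p : u' < p') (hp'0 : 0 < p')
    (hexp : 1/u' - 1/p' = 1/p - 1/u) (μ : (Fin d → ℤ) → ℂ) :
    lpNorm d u' μ ≤ XjNorm d u p p' j μ := by
  have hu'0 : (0:ℝ) < u' := lt_of_lt_of_le one_pos hu'1
  haveI : Nonempty (Fin (2^j)) := ⟨⟨0, by positivity⟩⟩
  have hP : 1 ≤ p' / u' := (one_le_div hu'0).mpr hu'p.le
  have hup : u' * (p'/u') = p' := by field_simp
  have step : ∀ m : Fin d → ℤ,
      (∑' k : {k : Fin d → ℤ // inDyadic d j m k}, (‖μ k.1‖₊ : ℝ≥0∞) ^ u') ^ (1/u') ≤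
        ((2:ℝ≥0∞) ^ (j*d)) ^ (1/p - 1/u) *
          (∑' k : {k : Fin d → ℤ // inDyadic d j m k}, (‖μ k.1‖₊ : ℝ≥0∞) ^ p') ^ (1/p') := by
    intro m
    have h1 : ∀ r : ℝ, (∑' k : {k : Fin d → ℤ // inDyadic d j m k}, (‖μ k.1‖₊ : ℝ≥0∞) ^ r)
        = ∑' f : Fin d → Fin (2^j),
            (‖μ (((cubeFinEquiv d j m).symm f) : {k : Fin d → ℤ // inDyadic d j m k}).1‖₊ : ℝ≥0∞) ^ r :=
      fun r => ((cubeFinEquiv d j m).symm.tsum_eq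
        (fun k : {k : Fin d → ℤ // inDyadic d j m k} => (‖μ k.1‖₊ : ℝ≥0∞) ^ r)).symm
    have hcard : ((Fintype.card (Fin d → Fin (2^j)) : ℝ≥0∞)) = (2:ℝ≥0∞)^(j*d) := by
      rw [Fintype.card_fun, Fintype.card_fin, Fintype.card_fin]
      push_cast
      rw [← pow_mul]
    rw [h1 u', h1 p']
    have hj := jensen_fin hP hu'0 hp'0 hup
      (fun f : Fin d → Fin (2^j) =>
        (‖μ (((cubeFinEquiv d j m).symm f) : {k : Fin d → ℤ // inDyadic d j m k}).1‖₊ : ℝ≥0∞))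
      (fun f => ENNReal.coe_ne_top)
    rw [hcard, hexp] at hj
    exact hj
  unfold lpNorm
  rw [tsum_dyadic d j (fun k => (‖μ k‖₊ : ℝ≥0∞) ^ u')]
  calc (∑' (m : Fin d → ℤ), ∑' k : {k : Fin d → ℤ // inDyadic d j m k},
          (‖μ k.1‖₊ : ℝ≥0∞) ^ u') ^ (1/u')
      ≤ ∑' (m : Fin d → ℤ), (∑' k : {k : Fin d → ℤ // inDyadic d j m k},
          (‖μ k.1‖₊ : ℝ≥0∞) ^ u') ^ (1/u') :=
        rpow_tsum_le' (by positivity) ((div_le_one hu'0).mpr hu'1) _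
    _ ≤ ∑' (m : Fin d → ℤ), ((2:ℝ≥0∞) ^ (j*d)) ^ (1/p - 1/u) *
          (∑' k : {k : Fin d → ℤ // inDyadic d j m k}, (‖μ k.1‖₊ : ℝ≥0∞) ^ p') ^ (1/p') :=
        ENNReal.tsum_le_tsum step
    _ = XjNorm d u p p' j μ := by
        rw [ENNReal.tsum_mul_left]; rfl

private lemma XjNorm_zero_fun (d : ℕ) {u p p' : ℝ} (hp'0 : 0 < p') (j : ℕ) :
    XjNorm d u p p' j 0 = 0 := by
  unfold XjNorm
  simp [ENNReal.zero_rpow_of_pos, hp'0, one_div_pos.mpr hp'0]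

private lemma XjNorm_zero_eq (d : ℕ) {u p p' : ℝ} (hp'0 : 0 < p') (lam : (Fin d → ℤ) → ℂ) :
    XjNorm d u p p' 0 lam = lpNorm d 1 lam := by
  unfold XjNorm lpNorm
  have h1 : ∀ m : Fin d → ℤ,
      (∑' k : {k : Fin d → ℤ // inDyadic d 0 m k}, (‖lam k.1‖₊ : ℝ≥0∞) ^ p') ^ (1/p')
        = (‖lam m‖₊ : ℝ≥0∞) := by
    intro m
    have hm : inDyadic d 0 m m := by
      intro i
      constructor
      · norm_num
      · norm_num
    have h2 : (∑' k : {k : Fin d → ℤ // inDyadic d 0 m k}, (‖lam k.1‖₊ : ℝ≥0∞) ^ p')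
        = (‖lam m‖₊ : ℝ≥0∞) ^ p' := by
      rw [tsum_eq_single (⟨m, hm⟩ : {k : Fin d → ℤ // inDyadic d 0 m k})]
      · intro b hb
        exfalso
        apply hb
        apply Subtype.ext
        funext i
        show (b : Fin d → ℤ) i = m i
        have hbi := b.2 i
        norm_num at hbi
        omega
    rw [h2, ← ENNReal.rpow_mul, mul_one_div_cancel hp'0.ne', ENNReal.rpow_one]
  simp only [h1]
  norm_num [ENNReal.rpow_one]

private lemma lpNorm_delta (d : ℕ) {r : ℝ} (hr : 0 < r) :
    lpNorm d r (fun k => if k = 0 then 1 else 0) = 1 := by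
  unfold lpNorm
  have h : (∑' k : Fin d → ℤ, (‖(if k = 0 then (1:ℂ) else 0)‖₊ : ℝ≥0∞) ^ r) = 1 := by
    rw [tsum_eq_single (0 : Fin d → ℤ)]
    · simp
    · intro b hb
      simp [hb, ENNReal.zero_rpow_of_pos hr]
  rw [h, ENNReal.one_rpow]

/-- STATEMENT 12 -/theorem l1_embeds_Xup_embeds_lu' (d : ℕ) (hd : 0 < d) (u p p' u' : ℝ)
    (hp : 1 ≤ p) (hpu : p < u) (hp'pos : 0 < p') (hp' : 1 / p + 1 / p' = 1)
    (hu' : 1 / u + 1 / u' = 1) :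
    (∀ lam : (Fin d → ℤ) → ℂ, XupNorm d u p p' lam ≤ lpNorm d 1 lam) ∧
    (∀ lam : (Fin d → ℤ) → ℂ, lpNorm d u' lam ≤ XupNorm d u p p' lam) ∧
    (∀ C : ℝ≥0∞, (∀ lam : (Fin d → ℤ) → ℂ, XupNorm d u p p' lam ≤ C * lpNorm d 1 lam) →
      1 ≤ C) ∧
    (∀ C : ℝ≥0∞, (∀ lam : (Fin d → ℤ) → ℂ, lpNorm d u' lam ≤ C * XupNorm d u p p' lam) →
      1 ≤ C) := by
  -- parameter arithmetic
  have hp0 : (0:ℝ) < p := lt_of_lt_of_le one_pos hp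
  have hu0 : (0:ℝ) < u := lt_trans hp0 hpu
  have hu1 : (1:ℝ) < u := lt_of_le_of_lt hp hpu
  have hp'inv : (0:ℝ) < 1/p' := by positivity
  have hp1 : (1:ℝ) < p := by
    have h1 : 1/p < 1 := by linarith
    exact (div_lt_one hp0).mp h1
  have hiu : (0:ℝ) < 1/u := by positivity
  have hiu1 : 1/u < 1 := (div_lt_one hu0).mpr hu1
  have hu'invpos : (0:ℝ) < 1/u' := by linarith
  have hu'0 : (0:ℝ) < u' := one_div_pos.mp hu'invpos
  have hu'1 : (1:ℝ) ≤ u' := (div_le_one hu'0).mp (by linarith)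
  have hip : (0:ℝ) < 1/p := by positivity
  have hiup : 1/u < 1/p := one_div_lt_one_div_of_lt hp0 hpu
  have hu'p' : u' < p' := lt_of_one_div_lt_one_div hp'pos (by linarith)
  have hexp : 1/u' - 1/p' = 1/p - 1/u := by linarith
  -- Part 1
  have key1 : ∀ lam : (Fin d → ℤ) → ℂ, XupNorm d u p p' lam ≤ lpNorm d 1 lam := by
    intro lam
    have hdecomp : ∀ k, HasSum (fun j : ℕ => if j = 0 then lam k else (0:ℂ)) (lam k) :=
      fun k => hasSum_ite_eq 0 (lam k)
    have hle : XupNorm d u p p' lam ≤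
        ∑' j : ℕ, XjNorm d u p p' j (fun k => if j = 0 then lam k else 0) :=
      iInf₂_le (fun j k => if j = 0 then lam k else 0) hdecomp
    have heq : (∑' j : ℕ, XjNorm d u p p' j (fun k => if j = 0 then lam k else 0))
        = XjNorm d u p p' 0 lam := by
      rw [tsum_eq_single 0]
      · simp
      · intro b hb
        have hLb : (fun k : Fin d → ℤ => if b = 0 then lam k else 0)
            = (0 : (Fin d → ℤ) → ℂ) := funext fun k => if_neg hb
        rw [hLb, XjNorm_zero_fun d hp'pos b]
    rw [heq, XjNorm_zero_eq d hp'pos lam] at hle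
    exact hle
  -- Part 2
  have key2 : ∀ lam : (Fin d → ℤ) → ℂ, lpNorm d u' lam ≤ XupNorm d u p p' lam := by
    intro lam
    unfold XupNorm
    refine le_iInf fun L => le_iInf fun hL => ?_
    have hpt : ∀ k, (‖lam k‖₊ : ℝ≥0∞) ≤ ∑' j : ℕ, (‖L j k‖₊ : ℝ≥0∞) := by
      intro k
      by_cases h : (∑' j : ℕ, (‖L j k‖₊ : ℝ≥0∞)) = ⊤
      · rw [h]; exact le_top
      · have hs : Summable (fun j : ℕ => ‖L j k‖₊) := ENNReal.tsum_coe_ne_top_iff_summable.mp h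
        rw [← ENNReal.coe_tsum hs, ENNReal.coe_le_coe, ← (hL k).tsum_eq]
        exact nnnorm_tsum_le hs
    calc lpNorm d u' lam
        ≤ (∑' k : Fin d → ℤ, (∑' j : ℕ, (‖L j k‖₊ : ℝ≥0∞)) ^ u') ^ (1/u') := by
          unfold lpNorm
          exact ENNReal.rpow_le_rpow (ENNReal.tsum_le_tsum fun k =>
            ENNReal.rpow_le_rpow (hpt k) hu'0.le) (by positivity)
      _ ≤ ∑' j : ℕ, (∑' k : Fin d → ℤ, (‖L j k‖₊ : ℝ≥0∞) ^ u') ^ (1/u') :=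
          minkowski_tsum' hu'1 _
      _ ≤ ∑' j : ℕ, XjNorm d u p p' j (L j) :=
          ENNReal.tsum_le_tsum fun j => lpNorm_le_XjNorm d j hu'1 hu'p' hp'pos hexp (L j)
  -- sharpness via the delta sequence
  have hδ1 : lpNorm d 1 (fun k => if k = 0 then 1 else 0) = 1 := lpNorm_delta d one_pos
  have hδu' : lpNorm d u' (fun k => if k = 0 then 1 else 0) = 1 := lpNorm_delta d hu'0
  refine ⟨key1, key2, ?_, ?_⟩
  · intro C hC
    have h := hC (fun k => if k = 0 then 1 else 0)
    rw [hδ1, mul_one] at h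
    calc (1:ℝ≥0∞) = lpNorm d u' (fun k => if k = 0 then 1 else 0) := hδu'.symm
      _ ≤ XupNorm d u p p' (fun k => if k = 0 then 1 else 0) := key2 _
      _ ≤ C := h
  · intro C hC
    have h := hC (fun k => if k = 0 then 1 else 0)
    rw [hδu'] at h
    have h2 : XupNorm d u p p' (fun k => if k = 0 then 1 else 0) ≤ 1 := by
      rw [← hδ1]; exact key1 _
    calc (1:ℝ≥0∞) ≤ C * XupNorm d u p p' (fun k => if k = 0 then 1 else 0) := h
      _ ≤ C * 1 := mul_le_mul_right h2 C
      _ = C := mul_one C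
end

section
/- Let $0<p<u<\infty$. Define $m^0_{u,p}(\mathbb{Z}^d)=m_{u,p}(\mathbb{Z}^d)\cap c_0(\mathbb{Z}^d)$ and let $m^{00}_{u,p}(\mathbb{Z}^d)$ be the closure of the finitely supported sequences $c_{00}(\mathbb{Z}^d)$ in $m_{u,p}(\mathbb{Z}^d)$. Then $m^0_{u,p}$ and $m^{00}_{u,p}$ are closed subspaces of $m_{u,p}(\mathbb{Z}^d)$ and the inclusions are strict: $m^{00}_{u,p}(\mathbb{Z}^d)\subsetneq m^0_{u,p}(\mathbb{Z}^d)\subsetneq m_{u,p}(\mathbb{Z}^d)$. -/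
open scoped ENNReal NNReal BigOperators
open Filter

namespace MS

noncomputable def E (x : ℝ) : ℝ≥0∞ := (2 : ℝ≥0∞) ^ x

lemma E_add (x y : ℝ) : E x * E y = E (x + y) :=
  (ENNReal.rpow_add x y two_ne_zero ENNReal.ofNat_ne_top).symm

lemma E_rpow (x y : ℝ) : (E x) ^ y = E (x * y) := (ENNReal.rpow_mul 2 x y).symm

lemma E_coe (x : ℝ) : E x = (((2 : ℝ≥0) ^ x : ℝ≥0) : ℝ≥0∞) := by
  rw [E, show (2 : ℝ≥0∞) = ((2 : ℝ≥0) : ℝ≥0∞) by norm_num,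
    ENNReal.coe_rpow_of_ne_zero (by norm_num)]

lemma E_ne_top (x : ℝ) : E x ≠ ⊤ := by rw [E_coe]; exact ENNReal.coe_ne_top

lemma E_lt_top (x : ℝ) : E x < ⊤ := lt_of_le_of_ne le_top (E_ne_top x)

lemma E_ne_zero (x : ℝ) : E x ≠ 0 := by
  simp [E, ENNReal.rpow_eq_zero_iff]

lemma E_zero : E 0 = 1 := ENNReal.rpow_zero

lemma E_mono {x y : ℝ} (h : x ≤ y) : E x ≤ E y :=
  ENNReal.rpow_le_rpow_of_exponent_le one_le_two h

lemma E_natCast (n : ℕ) : (2 : ℝ≥0∞) ^ n = E n := (ENNReal.rpow_natCast 2 n).symm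

lemma E_lt_one {x : ℝ} (hx : x < 0) : E x < 1 :=
  ENNReal.rpow_lt_one_of_one_lt_of_neg (by norm_num) hx

lemma E_one_le {x : ℝ} (hx : 0 ≤ x) : 1 ≤ E x := by
  simpa [E_zero] using E_mono hx

lemma tsum_const_fintype {β : Type*} [Fintype β] (c : ℝ≥0∞) :
    ∑' _ : β, c = (Fintype.card β : ℝ≥0∞) * c := by
  rw [tsum_fintype, Finset.sum_const, nsmul_eq_mul]
  simp [Finset.card_univ]

def cubeEquiv (d j : ℕ) (m : Fin d → ℤ) :
    {k : Fin d → ℤ // inDyadic d j m k} ≃ (Fin d → Fin (2 ^ j)) where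
  toFun k i := ⟨(k.1 i - 2 ^ j * m i).toNat, by
    have h := k.2 i
    have h2 : (0:ℤ) < 2 ^ j := by positivity
    have h3 : ((2 ^ j : ℕ) : ℤ) = 2 ^ j := by push_cast; ring
    have h4 : (2:ℤ) ^ j * (m i + 1) = 2 ^ j * m i + 2 ^ j := by ring
    omega⟩
  invFun v := ⟨fun i => 2 ^ j * m i + (v i : ℕ), by
    intro i
    have h := (v i).isLt
    have h3 : ((2 ^ j : ℕ) : ℤ) = 2 ^ j := by push_cast; ring
    have h4 : (2:ℤ) ^ j * (m i + 1) = 2 ^ j * m i + 2 ^ j := by ring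
    dsimp only
    omega⟩
  left_inv k := by
    ext i
    have h := k.2 i
    have h3 : ((2 ^ j : ℕ) : ℤ) = 2 ^ j := by push_cast; ring
    have h4 : (2:ℤ) ^ j * (m i + 1) = 2 ^ j * m i + 2 ^ j := by ring
    dsimp only
    omega
  right_inv v := by
    funext i
    have h := (v i).isLt
    have h3 : ((2 ^ j : ℕ) : ℤ) = 2 ^ j := by push_cast; ring
    ext
    dsimp only
    omega

lemma cube_tsum_const (d j : ℕ) (m : Fin d → ℤ) (c : ℝ≥0∞) :
    ∑' _ : {k : Fin d → ℤ // inDyadic d j m k}, c = E (j * d) * c := by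
  rw [(cubeEquiv d j m).tsum_eq (fun _ : Fin d → Fin (2 ^ j) => c), tsum_const_fintype]
  congr 1
  rw [Fintype.card_fun]
  simp only [Fintype.card_fin]
  rw [← pow_mul]
  rw [show ((2 ^ (j * d) : ℕ) : ℝ≥0∞) = (2 : ℝ≥0∞) ^ (j * d) by push_cast; ring]
  rw [E_natCast]
  push_cast
  ring_nf

lemma term_le_morreyNorm (d : ℕ) (u p : ℝ) (lam : (Fin d → ℤ) → ℂ) (j : ℕ) (m : Fin d → ℤ) :
    ((2 : ℝ≥0∞) ^ (j * d)) ^ (1 / u - 1 / p) *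
      (∑' k : {k : Fin d → ℤ // inDyadic d j m k}, (‖lam k.1‖₊ : ℝ≥0∞) ^ p) ^ (1 / p) ≤
    morreyNorm d u p lam := by
  rw [morreyNorm]
  exact le_iSup_of_le j (le_iSup_of_le m le_rfl)

lemma single_le_morreyNorm (d : ℕ) (u p : ℝ) (hp : 0 < p) (lam : (Fin d → ℤ) → ℂ)
    (k : Fin d → ℤ) : (‖lam k‖₊ : ℝ≥0∞) ≤ morreyNorm d u p lam := by
  have hins : inDyadic d 0 k k := by
    intro i; simp only [pow_zero, one_mul]; omega
  haveI : Unique {k' : Fin d → ℤ // inDyadic d 0 k k'} :=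
    { default := ⟨k, hins⟩
      uniq := by
        rintro ⟨k', hk'⟩
        apply Subtype.ext
        show k' = k
        funext i
        have := hk' i
        simp only [pow_zero, one_mul] at this
        omega }
  have hsum : ∑' k' : {k' : Fin d → ℤ // inDyadic d 0 k k'}, (‖lam k'.1‖₊ : ℝ≥0∞) ^ p
      = (‖lam k‖₊ : ℝ≥0∞) ^ p := by
    rw [tsum_eq_single (⟨k, hins⟩ : {k' : Fin d → ℤ // inDyadic d 0 k k'})
      (by intro b hb; exact absurd (Subsingleton.elim b ⟨k, hins⟩) hb)]
  have := term_le_morreyNorm d u p lam 0 k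
  rw [hsum] at this
  calc (‖lam k‖₊ : ℝ≥0∞)
      = ((2 : ℝ≥0∞) ^ (0 * d)) ^ (1 / u - 1 / p) * ((‖lam k‖₊ : ℝ≥0∞) ^ p) ^ (1 / p) := by
        rw [Nat.zero_mul, pow_zero, ENNReal.one_rpow, one_mul, ← ENNReal.rpow_mul,
          mul_one_div_cancel hp.ne', ENNReal.rpow_one]
    _ ≤ _ := this

lemma rpow_add_le_two (x y : ℝ≥0∞) (r : ℝ) (hr : 0 ≤ r) :
    (x + y) ^ r ≤ E r * (x ^ r + y ^ r) := by
  have h1 : x + y ≤ 2 * max x y := by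
    rcases le_total x y with h | h
    · rw [max_eq_right h, two_mul]; exact add_le_add h le_rfl
    · rw [max_eq_left h, two_mul]; exact add_le_add le_rfl h
  calc (x + y) ^ r ≤ (2 * max x y) ^ r := ENNReal.rpow_le_rpow h1 hr
    _ = E r * (max x y) ^ r := by rw [ENNReal.mul_rpow_of_nonneg _ _ hr]; rfl
    _ ≤ E r * (x ^ r + y ^ r) := by
        refine mul_le_mul_right ?_ _
        rcases le_total x y with h | h
        · rw [max_eq_right h]; exact le_add_self
        · rw [max_eq_left h]; exact le_add_right le_rfl

lemma morreyNorm_add_le (d : ℕ) (u p : ℝ) (hp : 0 < p) (f g : (Fin d → ℤ) → ℂ) :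
    morreyNorm d u p (f + g) ≤ E (1 + 1 / p) * (morreyNorm d u p f + morreyNorm d u p g) := by
  rw [morreyNorm]
  refine iSup_le fun j => iSup_le fun m => ?_
  set W : ℝ≥0∞ := ((2 : ℝ≥0∞) ^ (j * d)) ^ (1 / u - 1 / p) with hW
  set Sf : ℝ≥0∞ := ∑' k : {k : Fin d → ℤ // inDyadic d j m k}, (‖f k.1‖₊ : ℝ≥0∞) ^ p with hSf
  set Sg : ℝ≥0∞ := ∑' k : {k : Fin d → ℤ // inDyadic d j m k}, (‖g k.1‖₊ : ℝ≥0∞) ^ p with hSg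
  have step1 : (∑' k : {k : Fin d → ℤ // inDyadic d j m k}, (‖(f + g) k.1‖₊ : ℝ≥0∞) ^ p)
      ≤ E p * (Sf + Sg) := by
    have hpt : ∀ k : {k : Fin d → ℤ // inDyadic d j m k},
        (‖(f + g) k.1‖₊ : ℝ≥0∞) ^ p ≤ E p * ((‖f k.1‖₊ : ℝ≥0∞) ^ p + (‖g k.1‖₊ : ℝ≥0∞) ^ p) := by
      intro k
      refine le_trans ?_ (rpow_add_le_two _ _ p hp.le)
      refine ENNReal.rpow_le_rpow ?_ hp.le
      have : ‖(f + g) k.1‖₊ ≤ ‖f k.1‖₊ + ‖g k.1‖₊ := by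
        simpa [Pi.add_apply] using nnnorm_add_le (f k.1) (g k.1)
      exact_mod_cast this
    calc _ ≤ ∑' k : {k : Fin d → ℤ // inDyadic d j m k},
          E p * ((‖f k.1‖₊ : ℝ≥0∞) ^ p + (‖g k.1‖₊ : ℝ≥0∞) ^ p) := ENNReal.tsum_le_tsum hpt
      _ = E p * (Sf + Sg) := by rw [ENNReal.tsum_mul_left, ENNReal.tsum_add]
  have hp' : (0:ℝ) ≤ 1 / p := by positivity
  calc W * (∑' k : {k : Fin d → ℤ // inDyadic d j m k}, (‖(f + g) k.1‖₊ : ℝ≥0∞) ^ p) ^ (1 / p)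
      ≤ W * (E p * (Sf + Sg)) ^ (1 / p) :=
        mul_le_mul_right (ENNReal.rpow_le_rpow step1 hp') _
    _ = W * (E 1 * (Sf + Sg) ^ (1 / p)) := by
        rw [ENNReal.mul_rpow_of_nonneg _ _ hp', E_rpow, mul_one_div_cancel hp.ne']
    _ ≤ W * (E 1 * (E (1 / p) * (Sf ^ (1 / p) + Sg ^ (1 / p)))) :=
        mul_le_mul_right (mul_le_mul_right (rpow_add_le_two _ _ _ hp') _) _
    _ = E (1 + 1 / p) * (W * Sf ^ (1 / p) + W * Sg ^ (1 / p)) := by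
        rw [← E_add]; ring
    _ ≤ E (1 + 1 / p) * (morreyNorm d u p f + morreyNorm d u p g) := by
        refine mul_le_mul_right (add_le_add ?_ ?_) _
        · exact term_le_morreyNorm d u p f j m
        · exact term_le_morreyNorm d u p g j m

lemma norm_apply_lt_of_morreyNorm_lt {d : ℕ} {u p : ℝ} (hp : 0 < p)
    {f : (Fin d → ℤ) → ℂ} {ε : ℝ} (hε : 0 < ε)
    (h : morreyNorm d u p f < ENNReal.ofReal ε) (k : Fin d → ℤ) : ‖f k‖ < ε := by
  have h1 := (single_le_morreyNorm d u p hp f k).trans_lt h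
  rw [← enorm_eq_nnnorm, ← ofReal_norm] at h1
  exact (ENNReal.ofReal_lt_ofReal_iff hε).mp h1

lemma tendsto_of_approx (d : ℕ) (u p : ℝ) (hp : 0 < p) (lam : (Fin d → ℤ) → ℂ)
    (h : ∀ ε : ℝ≥0∞, 0 < ε → ∃ mu : (Fin d → ℤ) → ℂ,
      Tendsto mu cofinite (nhds 0) ∧ morreyNorm d u p (lam - mu) < ε) :
    Tendsto lam cofinite (nhds 0) := by
  rw [Metric.tendsto_nhds]
  intro ε hε
  obtain ⟨mu, hmu, hnorm⟩ := h (ENNReal.ofReal (ε / 2)) (ENNReal.ofReal_pos.mpr (half_pos hε))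
  have hpt : ∀ k, ‖lam k - mu k‖ < ε / 2 := by
    intro k
    have := norm_apply_lt_of_morreyNorm_lt hp (half_pos hε) hnorm k
    simpa [Pi.sub_apply] using this
  have h2 := Metric.tendsto_nhds.mp hmu (ε / 2) (half_pos hε)
  filter_upwards [h2] with k hk
  rw [dist_zero_right] at hk ⊢
  have h3 : ‖lam k‖ ≤ ‖lam k - mu k‖ + ‖mu k‖ := by
    simpa using norm_add_le (lam k - mu k) (mu k)
  linarith [hpt k]

lemma finsupp_tendsto {d : ℕ} {mu : (Fin d → ℤ) → ℂ} (h : (Function.support mu).Finite) :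
    Tendsto mu cofinite (nhds 0) := by
  have hev : ∀ᶠ k in cofinite, mu k = 0 := by
    rw [eventually_cofinite]
    simpa [Function.support] using h
  have heq : mu =ᶠ[cofinite] (fun _ => (0:ℂ)) := hev
  exact Tendsto.congr' heq.symm tendsto_const_nhds

lemma exists_delta (ε : ℝ≥0∞) (hε : 0 < ε) (C : ℝ≥0∞) (hC0 : C ≠ 0) (hCt : C ≠ ⊤) :
    ∃ δ : ℝ≥0∞, 0 < δ ∧ C * (δ + δ) < ε := by
  rcases eq_or_ne ε ⊤ with rfl | htop
  · refine ⟨1, one_pos, ?_⟩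
    exact (ENNReal.mul_lt_top hCt.lt_top (by norm_num)).trans_le le_top |>.trans_le le_rfl
  · refine ⟨ε / 2 / (2 * C), ENNReal.div_pos (by simp [hε.ne', htop]) (ENNReal.mul_ne_top (by norm_num) hCt), ?_⟩
    have hkey : C * (ε / 2 / (2 * C) + ε / 2 / (2 * C)) = (2 * C) * (ε / 2 / (2 * C)) := by
      ring
    rw [hkey, ENNReal.mul_div_cancel (by simp [hC0]) (ENNReal.mul_ne_top (by norm_num) hCt)]
    exact ENNReal.half_lt_self hε.ne' htop

lemma tsum_le_card_mul {α : Type*} {g : α → ℝ≥0∞} {c : ℝ≥0∞} (hg : ∀ x, g x ≤ c) {n : ℕ}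
    (f : {x : α // g x ≠ 0} → Fin n) (hf : Function.Injective f) :
    ∑' x, g x ≤ n * c := by
  rw [← tsum_subtype_support g]
  calc ∑' x : Function.support g, g x.1 ≤ ∑' _ : Function.support g, c :=
        ENNReal.tsum_le_tsum fun x => hg x.1
    _ = ∑' _ : {x : α // g x ≠ 0}, c := rfl
    _ ≤ ∑' _ : Fin n, c := ENNReal.tsum_comp_le_tsum_of_injective hf (fun _ => c)
    _ = n * c := by rw [tsum_const_fintype]; simp

lemma weight_eq (j d : ℕ) (r : ℝ) :
    ((2 : ℝ≥0∞) ^ (j * d)) ^ r = E ((j * d : ℕ) * r) := by rw [E_natCast, E_rpow]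

lemma morreyNorm_le_of_inner (d : ℕ) {u p : ℝ} (hp : 0 < p) (hu : 0 < u)
    (lam : (Fin d → ℤ) → ℂ) (Cg : ℝ≥0∞)
    (h : ∀ (ν : ℕ) (m : Fin d → ℤ),
      ∑' k : {k : Fin d → ℤ // inDyadic d ν m k}, (‖lam k.1‖₊ : ℝ≥0∞) ^ p
        ≤ Cg * E (ν * (d * (1 - p / u)))) :
    morreyNorm d u p lam ≤ Cg ^ (1 / p) := by
  rw [morreyNorm]
  refine iSup_le fun ν => iSup_le fun m => ?_
  have hp' : (0:ℝ) ≤ 1 / p := by positivity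
  calc ((2 : ℝ≥0∞) ^ (ν * d)) ^ (1 / u - 1 / p) *
        (∑' k : {k : Fin d → ℤ // inDyadic d ν m k}, (‖lam k.1‖₊ : ℝ≥0∞) ^ p) ^ (1 / p)
      ≤ E ((ν * d : ℕ) * (1 / u - 1 / p)) * (Cg * E (ν * (d * (1 - p / u)))) ^ (1 / p) := by
        rw [weight_eq]
        exact mul_le_mul_right (ENNReal.rpow_le_rpow (h ν m) hp') _
    _ = Cg ^ (1 / p) *
        (E ((ν * d : ℕ) * (1 / u - 1 / p)) * E (ν * (d * (1 - p / u)) * (1 / p))) := by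
        rw [ENNReal.mul_rpow_of_nonneg _ _ hp', E_rpow]; ring
    _ = Cg ^ (1 / p) := by
        rw [E_add]
        have : ((ν * d : ℕ) : ℝ) * (1 / u - 1 / p) + ν * (d * (1 - p / u)) * (1 / p) = 0 := by
          push_cast
          field_simp
          ring
        rw [this, E_zero, mul_one]

lemma growth (γ : ℝ) (hγ : 0 < γ) :
    ∃ C : ℝ≥0∞, C ≠ ⊤ ∧ ∀ ν : ℕ, ((ν : ℝ≥0∞) + 2) ≤ C * E (ν * γ) := by
  set CR : ℝ := max 2 (2 / (γ * Real.log 2)) with hCR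
  have hlog : 0 < Real.log 2 := Real.log_pos one_lt_two
  have hCR2 : (2:ℝ) ≤ CR := le_max_left _ _
  have hCRg : 2 / (γ * Real.log 2) ≤ CR := le_max_right _ _
  have hCRpos : 0 < CR := lt_of_lt_of_le two_pos hCR2
  refine ⟨ENNReal.ofReal CR, ENNReal.ofReal_ne_top, fun ν => ?_⟩
  have hreal : ((ν : ℝ) + 2) ≤ CR * (2 : ℝ) ^ ((ν : ℝ) * γ) := by
    have hexp : (2 : ℝ) ^ ((ν : ℝ) * γ) = Real.exp ((ν : ℝ) * γ * Real.log 2) := by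
      rw [Real.rpow_def_of_pos two_pos]; ring_nf
    rw [hexp]
    have h1 : (1 : ℝ) + (ν : ℝ) * γ * Real.log 2 ≤ Real.exp ((ν : ℝ) * γ * Real.log 2) := by
      have := Real.add_one_le_exp ((ν : ℝ) * γ * Real.log 2)
      linarith
    have h2 : (2 : ℝ) ≤ CR * (γ * Real.log 2) := by
      rw [div_le_iff₀ (by positivity)] at hCRg
      linarith
    have hν : (0:ℝ) ≤ (ν:ℝ) := Nat.cast_nonneg ν
    nlinarith [mul_le_mul_of_nonneg_left h1 hCRpos.le]
  calc ((ν : ℝ≥0∞) + 2) = ENNReal.ofReal ((ν : ℝ) + 2) := by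
        rw [ENNReal.ofReal_add (Nat.cast_nonneg ν) (by norm_num)]
        simp [ENNReal.ofReal_natCast]
    _ ≤ ENNReal.ofReal (CR * (2 : ℝ) ^ ((ν : ℝ) * γ)) := ENNReal.ofReal_le_ofReal hreal
    _ = ENNReal.ofReal CR * E ((ν : ℝ) * γ) := by
        rw [ENNReal.ofReal_mul hCRpos.le, ← ENNReal.ofReal_rpow_of_pos two_pos]
        norm_num [E]

lemma gap {ν i i' : ℕ} (hii' : i < i') (hν : ν + 1 ≤ i') {c : ℤ}
    (h1 : 2 ^ ν * c ≤ 2 ^ i) (h4 : (2:ℤ) ^ i' < 2 ^ ν * (c + 1)) : False := by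
  have e1 : (2:ℤ) ^ i ≤ 2 ^ (i' - 1) := pow_le_pow_right₀ (by norm_num) (by omega)
  have e2 : (2:ℤ) ^ (i' - 1) * 2 = 2 ^ i' := by rw [← pow_succ]; congr 1; omega
  have e3 : (2:ℤ) ^ ν ≤ 2 ^ (i' - 1) := pow_le_pow_right₀ (by norm_num) (by omega)
  have e4 : (2:ℤ) ^ ν * (c + 1) = 2 ^ ν * c + 2 ^ ν := by ring
  linarith

def pt (d : ℕ) (i : ℕ) : Fin d → ℤ := fun x => if (x : ℕ) = 0 then 2 ^ i else 0

open Classical in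
noncomputable def lam3 (d : ℕ) : (Fin d → ℤ) → ℂ :=
  fun k => if ∃ i : ℕ, k = pt d i then 1 else 0

lemma lam3_pt (d : ℕ) (i : ℕ) : lam3 d (pt d i) = 1 := by
  rw [lam3, if_pos ⟨i, rfl⟩]

lemma lam3_exists_of_ne {d : ℕ} {k : Fin d → ℤ} (h : lam3 d k ≠ 0) : ∃ i, k = pt d i := by
  by_contra hc
  exact h (by rw [lam3, if_neg hc])

lemma pt_inj (d : ℕ) (hd : 0 < d) : Function.Injective (pt d) := by
  intro a b h
  have h0 := congrFun h ⟨0, hd⟩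
  simp [pt] at h0
  exact h0

lemma lam3_nnnorm_le (d : ℕ) (k : Fin d → ℤ) : (‖lam3 d k‖₊ : ℝ≥0∞) ≤ 1 := by
  rw [lam3]
  split_ifs <;> simp

lemma lam3_inner_le (d : ℕ) (hd : 0 < d) {p : ℝ} (hp : 0 < p) (ν : ℕ) (m : Fin d → ℤ) :
    ∑' k : {k : Fin d → ℤ // inDyadic d ν m k}, (‖lam3 d k.1‖₊ : ℝ≥0∞) ^ p
      ≤ ((ν : ℝ≥0∞) + 2) := by
  set α := {k : Fin d → ℤ // inDyadic d ν m k}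
  set g : α → ℝ≥0∞ := fun x => (‖lam3 d x.1‖₊ : ℝ≥0∞) ^ p with hg
  have hgle : ∀ x, g x ≤ 1 := fun x =>
    ENNReal.rpow_le_one (lam3_nnnorm_le d x.1) hp.le
  have hex : ∀ x : {x : α // g x ≠ 0}, ∃ i, x.1.1 = pt d i := by
    rintro ⟨⟨k, hk⟩, hgk⟩
    refine lam3_exists_of_ne fun h0 => hgk ?_
    simp only [hg, h0]
    simp [ENNReal.zero_rpow_of_pos hp]
  choose idx hidx using hex
  have hinj : Function.Injective
      (fun x : {x : α // g x ≠ 0} => (⟨min (idx x) (ν + 1), by omega⟩ : Fin (ν + 2))) := by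
    intro a b hab
    have hmin : min (idx a) (ν + 1) = min (idx b) (ν + 1) := by
      simpa using congrArg Fin.val hab
    have hidxeq : idx a = idx b := by
      by_contra hne
      have hboth : ν + 1 ≤ idx a ∧ ν + 1 ≤ idx b := by omega
      have ha := a.1.2 ⟨0, hd⟩
      have hb := b.1.2 ⟨0, hd⟩
      have ha0 : a.1.1 ⟨0, hd⟩ = 2 ^ idx a := by rw [hidx a]; simp [pt]
      have hb0 : b.1.1 ⟨0, hd⟩ = 2 ^ idx b := by rw [hidx b]; simp [pt]
      rw [ha0] at ha
      rw [hb0] at hb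
      rcases lt_trichotomy (idx a) (idx b) with h | h | h
      · exact gap h hboth.2 ha.1 hb.2
      · exact hne h
      · exact gap h hboth.1 hb.1 ha.2
    apply Subtype.ext
    apply Subtype.ext
    rw [hidx a, hidx b, hidxeq]
  have := tsum_le_card_mul hgle _ hinj
  calc ∑' x : α, g x ≤ ((ν + 2 : ℕ) : ℝ≥0∞) * 1 := this
    _ = (ν : ℝ≥0∞) + 2 := by push_cast; ring

instance inDyadicDec (d j : ℕ) (m k : Fin d → ℤ) : Decidable (inDyadic d j m k) :=
  decidable_of_iff (∀ i, 2 ^ j * m i ≤ k i ∧ k i < 2 ^ j * (m i + 1)) Iff.rfl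

def mblk (d : ℕ) (j : ℕ) : Fin d → ℤ := fun x => if (x : ℕ) = 0 then 2 ^ j else 0

lemma blk_gap {j j' : ℕ} (hlt : j < j') {k0 : ℤ}
    (hup : k0 < 2 ^ j * (2 ^ j + 1)) (hlo : (2:ℤ) ^ j' * 2 ^ j' ≤ k0) : False := by
  have p1 : (2:ℤ) ^ j * 2 ^ j = 2 ^ (2 * j) := by rw [← pow_add]; congr 1; omega
  have p2 : (2:ℤ) ^ (2 * j + 1) = 2 ^ (2 * j) * 2 := pow_succ 2 (2 * j)
  have p3 : (2:ℤ) ^ j ≤ 2 ^ (2 * j) := pow_le_pow_right₀ (by norm_num) (by omega)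
  have p4 : (2:ℤ) ^ (2 * j + 1) ≤ 2 ^ (2 * j') := pow_le_pow_right₀ (by norm_num) (by omega)
  have p5 : (2:ℤ) ^ j' * 2 ^ j' = 2 ^ (2 * j') := by rw [← pow_add]; congr 1; omega
  have p6 : (2:ℤ) ^ j * (2 ^ j + 1) = 2 ^ j * 2 ^ j + 2 ^ j := by ring
  linarith

lemma blocks_disjoint {d : ℕ} (hd : 0 < d) {j j' : ℕ} {k : Fin d → ℤ}
    (h : inDyadic d j (mblk d j) k) (h' : inDyadic d j' (mblk d j') k) : j = j' := by
  have h0 := h ⟨0, hd⟩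
  have h0' := h' ⟨0, hd⟩
  simp only [mblk, Fin.val_mk, if_pos rfl] at h0 h0'
  rcases lt_trichotomy j j' with hlt | heq | hlt
  · exact absurd (blk_gap hlt h0.2 h0'.1) not_false
  · exact heq
  · exact absurd (blk_gap hlt h0'.2 h0.1) not_false

noncomputable def aval (d : ℕ) (u : ℝ) (j : ℕ) : ℝ := (2:ℝ) ^ (-(((j * d : ℕ) : ℝ)) / u)

lemma aval_pos (d : ℕ) (u : ℝ) (j : ℕ) : 0 < aval d u j := Real.rpow_pos_of_pos two_pos _

open Classical in
noncomputable def lam2 (d : ℕ) (u : ℝ) : (Fin d → ℤ) → ℂ :=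
  fun k => if h : ∃ j, inDyadic d j (mblk d j) k then ((aval d u (Nat.find h) : ℝ) : ℂ) else 0

lemma lam2_on_block {d : ℕ} (hd : 0 < d) (u : ℝ) {j : ℕ} {k : Fin d → ℤ}
    (hk : inDyadic d j (mblk d j) k) : lam2 d u k = ((aval d u j : ℝ) : ℂ) := by
  rw [lam2, dif_pos ⟨j, hk⟩]
  norm_cast
  rw [blocks_disjoint hd (Nat.find_spec (⟨j, hk⟩ : ∃ j, inDyadic d j (mblk d j) k)) hk]

lemma lam2_off {d : ℕ} {u : ℝ} {k : Fin d → ℤ}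
    (h : ¬ ∃ j, inDyadic d j (mblk d j) k) : lam2 d u k = 0 := dif_neg h

lemma ofReal_nnnorm_rpow (x : ℝ) : (‖(((2:ℝ) ^ x : ℝ) : ℂ)‖₊ : ℝ≥0∞) = E x := by
  rw [Complex.nnnorm_real, ← enorm_eq_nnnorm, ← ofReal_norm,
    Real.norm_of_nonneg (Real.rpow_nonneg (by norm_num) x),
    ← ENNReal.ofReal_rpow_of_pos two_pos]
  norm_num [E]

lemma lam2_nnnorm_block {d : ℕ} (hd : 0 < d) (u : ℝ) {j : ℕ} {k : Fin d → ℤ}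
    (hk : inDyadic d j (mblk d j) k) :
    (‖lam2 d u k‖₊ : ℝ≥0∞) = E (-(((j * d : ℕ) : ℝ)) / u) := by
  rw [lam2_on_block hd u hk]
  exact ofReal_nnnorm_rpow _

lemma tsum_twosided (ν : ℕ) (c : ℝ) :
    (∑' j : ℕ, (if j ≤ ν then E (-(((ν - j : ℕ) : ℝ)) * c) else E (-(((j - ν : ℕ) : ℝ)) * c)))
      ≤ 2 * (1 - E (-c))⁻¹ := by
  have hinj : Function.Injective
      (fun j : ℕ => ((decide (j ≤ ν), if j ≤ ν then ν - j else j - ν) : Bool × ℕ)) := by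
    intro a b hab
    rw [Prod.mk.injEq] at hab
    have h1 : (a ≤ ν) = (b ≤ ν) := by
      have := hab.1
      by_cases ha : a ≤ ν <;> by_cases hb : b ≤ ν <;> simp [ha, hb] at this ⊢
    have h2 := hab.2
    by_cases ha : a ≤ ν <;> by_cases hb : b ≤ ν <;> simp [ha, hb] at h1 h2 ⊢ <;> omega
  have hcomp := ENNReal.tsum_comp_le_tsum_of_injective hinj
    (fun q : Bool × ℕ => E (-((q.2 : ℝ)) * c))
  have heq : (∑' j : ℕ, (if j ≤ ν then E (-(((ν - j : ℕ) : ℝ)) * c)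
      else E (-(((j - ν : ℕ) : ℝ)) * c)))
      = ∑' j : ℕ, E (-(((if j ≤ ν then ν - j else j - ν : ℕ) : ℝ)) * c) := by
    refine tsum_congr fun j => ?_
    split_ifs <;> rfl
  rw [heq]
  refine le_trans hcomp ?_
  rw [ENNReal.tsum_prod (f := fun (_ : Bool) (n : ℕ) => E (-((n : ℝ)) * c))]
  have hgeo : (∑' n : ℕ, E (-((n : ℝ)) * c)) = (1 - E (-c))⁻¹ := by
    rw [← ENNReal.tsum_geometric (E (-c))]
    refine tsum_congr fun n => ?_
    rw [← ENNReal.rpow_natCast (E (-c)) n, E_rpow]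
    congr 1
    ring
  rw [tsum_congr fun _ : Bool => hgeo, tsum_const_fintype]
  norm_num

lemma lam2_inner {d : ℕ} (hd : 0 < d) {u p : ℝ} (hp : 0 < p) (hpu : p < u)
    (ν : ℕ) (m : Fin d → ℤ) :
    ∑' k : {k : Fin d → ℤ // inDyadic d ν m k}, (‖lam2 d u k.1‖₊ : ℝ≥0∞) ^ p
      ≤ (2 * (1 - E (-(min ((d:ℝ) * (1 - p / u)) ((d:ℝ) * p / u))))⁻¹) *
        E (ν * ((d:ℝ) * (1 - p / u))) := by
  have hu : 0 < u := hp.trans hpu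
  set γ : ℝ := (d:ℝ) * (1 - p / u) with hγdef
  set c : ℝ := min γ ((d:ℝ) * p / u) with hcdef
  have hpt : ∀ k : {k : Fin d → ℤ // inDyadic d ν m k},
      (‖lam2 d u k.1‖₊ : ℝ≥0∞) ^ p ≤
        ∑' j : ℕ, (if inDyadic d j (mblk d j) k.1
          then E (-(((j * d : ℕ) : ℝ)) / u * p) else 0) := by
    intro k
    by_cases hk : ∃ j, inDyadic d j (mblk d j) k.1
    · obtain ⟨j, hj⟩ := hk
      have hv : (‖lam2 d u k.1‖₊ : ℝ≥0∞) ^ p = E (-(((j * d : ℕ) : ℝ)) / u * p) := by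
        rw [lam2_nnnorm_block hd u hj, E_rpow]
      rw [hv]
      refine le_trans ?_ (ENNReal.le_tsum j)
      rw [if_pos hj]
    · rw [lam2_off hk]
      simp [ENNReal.zero_rpow_of_pos hp]
  refine le_trans (ENNReal.tsum_le_tsum hpt) ?_
  rw [ENNReal.tsum_comm]
  have hterm : ∀ j : ℕ,
      (∑' k : {k : Fin d → ℤ // inDyadic d ν m k},
        (if inDyadic d j (mblk d j) k.1 then E (-(((j * d : ℕ) : ℝ)) / u * p) else 0))
      ≤ E (ν * γ) * (if j ≤ ν then E (-(((ν - j : ℕ) : ℝ)) * c)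
          else E (-(((j - ν : ℕ) : ℝ)) * c)) := by
    intro j
    set A : ℝ≥0∞ := E (-(((j * d : ℕ) : ℝ)) / u * p) with hA
    have hb1 : (∑' k : {k : Fin d → ℤ // inDyadic d ν m k},
        (if inDyadic d j (mblk d j) k.1 then A else 0)) ≤ E (ν * d) * A := by
      refine le_trans (ENNReal.tsum_le_tsum fun k => ?_) (le_of_eq (cube_tsum_const d ν m A))
      split_ifs
      · exact le_rfl
      · exact zero_le
    have hb2 : (∑' k : {k : Fin d → ℤ // inDyadic d ν m k},
        (if inDyadic d j (mblk d j) k.1 then A else 0)) ≤ E (j * d) * A := by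
      set F : (Fin d → ℤ) → ℝ≥0∞ := fun k' => if inDyadic d j (mblk d j) k' then A else 0
        with hF
      have h1 : (∑' k : {k : Fin d → ℤ // inDyadic d ν m k}, F k.1) ≤ ∑' k', F k' :=
        ENNReal.tsum_comp_le_tsum_of_injective Subtype.val_injective F
      have h2 : (∑' k', F k') = ∑' k' : {k' : Fin d → ℤ // inDyadic d j (mblk d j) k'}, F k'.1 := by
        rw [← tsum_subtype_eq_of_support_subset (s := {k' | inDyadic d j (mblk d j) k'})
          (by intro x hx; by_contra hc; exact hx (if_neg hc))]
        rfl
      have h3 : (∑' k' : {k' : Fin d → ℤ // inDyadic d j (mblk d j) k'}, F k'.1)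
          = E (j * d) * A := by
        rw [tsum_congr (fun k' : {k' : Fin d → ℤ // inDyadic d j (mblk d j) k'} =>
          (if_pos k'.2 : F k'.1 = A)), cube_tsum_const]
      exact h1.trans (le_of_eq (h2.trans h3))
    rcases le_or_gt j ν with hjν | hjν
    · rw [if_pos hjν]
      refine le_trans hb2 ?_
      rw [hA, E_add, E_add]
      apply E_mono
      have hc1 : c ≤ γ := min_le_left _ _
      have hcast : ((ν - j : ℕ) : ℝ) = (ν : ℝ) - j := by
        rw [Nat.cast_sub hjν]
      have hsub : (0:ℝ) ≤ (ν : ℝ) - j := by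
        rw [sub_nonneg]; exact_mod_cast hjν
      have h1 : ((ν:ℝ) - j) * c ≤ ((ν:ℝ) - j) * γ := mul_le_mul_of_nonneg_left hc1 hsub
      have hγj : ((j:ℝ) * d) + (-(((j:ℝ) * d)) / u * p) = (j:ℝ) * γ := by
        rw [hγdef]; field_simp; ring
      push_cast
      rw [hcast]
      linarith
    · rw [if_neg (not_le.mpr hjν)]
      refine le_trans hb1 ?_
      rw [hA, E_add, E_add]
      apply E_mono
      have hc2 : c ≤ (d:ℝ) * p / u := min_le_right _ _
      have hcast : ((j - ν : ℕ) : ℝ) = (j : ℝ) - ν := by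
        rw [Nat.cast_sub hjν.le]
      have hsub : (0:ℝ) ≤ (j : ℝ) - ν := by
        rw [sub_nonneg]; exact_mod_cast hjν.le
      have h1 : ((j:ℝ) - ν) * c ≤ ((j:ℝ) - ν) * ((d:ℝ) * p / u) :=
        mul_le_mul_of_nonneg_left hc2 hsub
      have hγj : ((ν:ℝ) * d) + (-(((j:ℝ) * d)) / u * p)
          = (ν:ℝ) * γ - ((j:ℝ) - ν) * ((d:ℝ) * p / u) := by
        rw [hγdef]; field_simp; ring
      push_cast
      rw [hcast]
      linarith
  refine le_trans (ENNReal.tsum_le_tsum hterm) ?_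
  rw [ENNReal.tsum_mul_left, mul_comm]
  exact mul_le_mul_left (tsum_twosided ν c) _

lemma gamma_pos {d : ℕ} (hd : 0 < d) {u p : ℝ} (hp : 0 < p) (hpu : p < u) :
    0 < (d:ℝ) * (1 - p / u) := by
  have hu : 0 < u := hp.trans hpu
  have h1 : p / u < 1 := (div_lt_one hu).mpr hpu
  have hd' : (1:ℝ) ≤ d := by exact_mod_cast hd
  nlinarith

lemma lam3_mem {d : ℕ} (hd : 0 < d) {u p : ℝ} (hp : 0 < p) (hpu : p < u) :
    MemMorrey d u p (lam3 d) := by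
  have hu : 0 < u := hp.trans hpu
  obtain ⟨C0, hC0top, hC0⟩ := growth _ (gamma_pos hd hp hpu)
  have hbound := morreyNorm_le_of_inner d hp hu (lam3 d) C0
    (fun ν m => le_trans (lam3_inner_le d hd hp ν m) (hC0 ν))
  exact ne_top_of_le_ne_top (ENNReal.rpow_ne_top_of_nonneg (by positivity) hC0top) hbound

lemma lam3_not_tendsto (d : ℕ) (hd : 0 < d) : ¬ Tendsto (lam3 d) cofinite (nhds 0) := by
  intro h
  have h2 := Metric.tendsto_nhds.mp h 1 one_pos
  rw [eventually_cofinite] at h2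
  have hsub : Set.range (pt d) ⊆ {k | ¬ dist (lam3 d k) 0 < 1} := by
    rintro _ ⟨i, rfl⟩
    simp [lam3_pt, dist_zero_right]
  exact (Set.infinite_range_of_injective (pt_inj d hd)) (h2.subset hsub)

lemma lam2_lower {d : ℕ} (hd : 0 < d) {u p : ℝ} (hp : 0 < p) (hpu : p < u)
    {mu : (Fin d → ℤ) → ℂ} (j : ℕ)
    (hmu : ∀ k, inDyadic d j (mblk d j) k → mu k = 0) :
    1 ≤ morreyNorm d u p (lam2 d u - mu) := by
  have hu : 0 < u := hp.trans hpu
  have hconst : ∀ k : {k : Fin d → ℤ // inDyadic d j (mblk d j) k},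
      (‖(lam2 d u - mu) k.1‖₊ : ℝ≥0∞) ^ p = E (-(((j * d : ℕ) : ℝ)) / u * p) := by
    intro k
    rw [Pi.sub_apply, hmu k.1 k.2, sub_zero, lam2_nnnorm_block hd u k.2, E_rpow]
  have hsum : ∑' k : {k : Fin d → ℤ // inDyadic d j (mblk d j) k},
      (‖(lam2 d u - mu) k.1‖₊ : ℝ≥0∞) ^ p
      = E (j * d) * E (-(((j * d : ℕ) : ℝ)) / u * p) := by
    rw [tsum_congr hconst, cube_tsum_const]
  have hterm := term_le_morreyNorm d u p (lam2 d u - mu) j (mblk d j)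
  rw [hsum, weight_eq] at hterm
  have hone : E (((j * d : ℕ) : ℝ) * (1 / u - 1 / p)) *
      (E (j * d) * E (-(((j * d : ℕ) : ℝ)) / u * p)) ^ (1 / p) = 1 := by
    rw [E_add, E_rpow, E_add]
    have hp0 : p ≠ 0 := hp.ne'
    have hu0 : u ≠ 0 := hu.ne'
    rw [show ((j * d : ℕ) : ℝ) * (1 / u - 1 / p) +
        ((j : ℝ) * d + -(((j * d : ℕ) : ℝ)) / u * p) * (1 / p) = 0 by
      push_cast; field_simp; ring]
    exact E_zero
  rw [hone] at hterm
  exact hterm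

lemma exists_free_block {d : ℕ} (hd : 0 < d) {mu : (Fin d → ℤ) → ℂ}
    (h : (Function.support mu).Finite) :
    ∃ j, ∀ k, inDyadic d j (mblk d j) k → mu k = 0 := by
  by_contra hc
  push_neg at hc
  choose w hw1 hw2 using hc
  have hinj : Function.Injective w := fun a b hab =>
    blocks_disjoint hd (hw1 a) (hab ▸ hw1 b)
  exact (Set.infinite_of_injective_forall_mem hinj (fun j => hw2 j)) h

lemma lam2_tendsto {d : ℕ} (hd : 0 < d) {u p : ℝ} (hp : 0 < p) (hpu : p < u) :
    Tendsto (lam2 d u) cofinite (nhds 0) := by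
  have hu : 0 < u := hp.trans hpu
  rw [Metric.tendsto_nhds]
  intro ε hε
  rw [eventually_cofinite]
  set r : ℝ := (2:ℝ) ^ (-((d:ℝ)) / u) with hr
  have hr0 : 0 < r := Real.rpow_pos_of_pos two_pos _
  have hdpos : (0:ℝ) < d := by exact_mod_cast hd
  have hr1 : r < 1 := Real.rpow_lt_one_of_one_lt_of_neg one_lt_two
    (div_neg_of_neg_of_pos (by linarith) hu)
  obtain ⟨J, hJ⟩ := exists_pow_lt_of_lt_one hε hr1
  have haval : ∀ j, J ≤ j → aval d u j < ε := by
    intro j hj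
    have h1 : aval d u j = r ^ j := by
      rw [aval, hr, ← Real.rpow_natCast ((2:ℝ) ^ (-((d:ℝ)) / u)) j,
        ← Real.rpow_mul (by norm_num)]
      congr 1
      push_cast
      ring
    rw [h1]
    calc r ^ j ≤ r ^ J := pow_le_pow_of_le_one hr0.le hr1.le hj
      _ < ε := hJ
  have hsub : {k | ¬ dist (lam2 d u k) 0 < ε} ⊆
      ⋃ j ∈ Finset.range J, {k | inDyadic d j (mblk d j) k} := by
    intro k hk
    simp only [Set.mem_setOf_eq, dist_zero_right] at hk
    by_cases hex : ∃ j, inDyadic d j (mblk d j) k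
    · obtain ⟨j, hj⟩ := hex
      have hnorm : ‖lam2 d u k‖ = aval d u j := by
        rw [lam2_on_block hd u hj, Complex.norm_real,
          Real.norm_of_nonneg (aval_pos d u j).le]
      have hjJ : j < J := by
        by_contra hge
        exact hk (hnorm ▸ haval j (by omega))
      simp only [Set.mem_iUnion]
      exact ⟨j, Finset.mem_range.mpr hjJ, hj⟩
    · exact absurd (by rw [lam2_off hex]; simpa using hε) hk
  refine Set.Finite.subset ?_ hsub
  refine Set.Finite.biUnion (Finset.finite_toSet _) (fun j _ => ?_)
  exact Set.finite_coe_iff.mp (Finite.of_equiv _ (cubeEquiv d j (mblk d j)).symm)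

lemma lam2_mem {d : ℕ} (hd : 0 < d) {u p : ℝ} (hp : 0 < p) (hpu : p < u) :
    MemMorrey d u p (lam2 d u) := by
  have hu : 0 < u := hp.trans hpu
  set c : ℝ := min ((d:ℝ) * (1 - p / u)) ((d:ℝ) * p / u) with hc
  have hcpos : 0 < c := by
    apply lt_min (gamma_pos hd hp hpu)
    have hdpos : (0:ℝ) < d := by exact_mod_cast hd
    positivity
  have hE : E (-c) < 1 := E_lt_one (by linarith)
  have h1 : (1 - E (-c)) ≠ 0 := by
    intro h
    exact absurd (tsub_eq_zero_iff_le.mp h) (not_le.mpr hE)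
  have hCg : (2 * (1 - E (-c))⁻¹ : ℝ≥0∞) ≠ ⊤ :=
    ENNReal.mul_ne_top (by norm_num) (ENNReal.inv_ne_top.mpr h1)
  have hbound := morreyNorm_le_of_inner d hp hu (lam2 d u) (2 * (1 - E (-c))⁻¹)
    (fun ν m => lam2_inner hd hp hpu ν m)
  exact ne_top_of_le_ne_top (ENNReal.rpow_ne_top_of_nonneg (by positivity) hCg) hbound

lemma lam2_not00 {d : ℕ} (hd : 0 < d) {u p : ℝ} (hp : 0 < p) (hpu : p < u) :
    ¬ MemMorrey00 d u p (lam2 d u) := by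
  rintro ⟨-, h⟩
  obtain ⟨mu, hfin, hlt⟩ := h 1 one_pos
  obtain ⟨j, hj⟩ := exists_free_block hd hfin
  exact absurd hlt (not_lt.mpr (lam2_lower hd hp hpu j hj))

end MS

theorem morrey00_subset_morrey0_subset_morrey (d : ℕ) (hd : 0 < d) (u p : ℝ)
    (hp : 0 < p) (hpu : p < u) :
    (∀ lam : (Fin d → ℤ) → ℂ, MemMorrey00 d u p lam →
        MemMorrey d u p lam ∧ Tendsto lam cofinite (nhds 0)) ∧
    (∃ lam : (Fin d → ℤ) → ℂ,
        (MemMorrey d u p lam ∧ Tendsto lam cofinite (nhds 0)) ∧ ¬ MemMorrey00 d u p lam) ∧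
    (∃ lam : (Fin d → ℤ) → ℂ,
        MemMorrey d u p lam ∧ ¬ (MemMorrey d u p lam ∧ Tendsto lam cofinite (nhds 0))) ∧
    (∀ lam : (Fin d → ℤ) → ℂ, MemMorrey d u p lam →
      (∀ ε : ℝ≥0∞, 0 < ε → ∃ mu : (Fin d → ℤ) → ℂ,
          (MemMorrey d u p mu ∧ Tendsto mu cofinite (nhds 0)) ∧
          morreyNorm d u p (lam - mu) < ε) →
      MemMorrey d u p lam ∧ Tendsto lam cofinite (nhds 0)) ∧
    (∀ lam : (Fin d → ℤ) → ℂ, MemMorrey d u p lam →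
      (∀ ε : ℝ≥0∞, 0 < ε → ∃ mu : (Fin d → ℤ) → ℂ,
          MemMorrey00 d u p mu ∧ morreyNorm d u p (lam - mu) < ε) →
      MemMorrey00 d u p lam) := by
  have hu : 0 < u := hp.trans hpu
  refine ⟨?_, ?_, ?_, ?_, ?_⟩
  · rintro lam ⟨hmem, happ⟩
    refine ⟨hmem, MS.tendsto_of_approx d u p hp lam ?_⟩
    intro ε hε
    obtain ⟨mu, hfin, hlt⟩ := happ ε hε
    exact ⟨mu, MS.finsupp_tendsto hfin, hlt⟩
  · exact ⟨MS.lam2 d u, ⟨MS.lam2_mem hd hp hpu, MS.lam2_tendsto hd hp hpu⟩,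
      MS.lam2_not00 hd hp hpu⟩
  · refine ⟨MS.lam3 d, MS.lam3_mem hd hp hpu, ?_⟩
    rintro ⟨-, ht⟩
    exact MS.lam3_not_tendsto d hd ht
  · intro lam hmem h
    refine ⟨hmem, MS.tendsto_of_approx d u p hp lam ?_⟩
    intro ε hε
    obtain ⟨mu, ⟨-, hten⟩, hlt⟩ := h ε hε
    exact ⟨mu, hten, hlt⟩
  · intro lam hmem h
    refine ⟨hmem, ?_⟩
    intro ε hε
    obtain ⟨δ, hδ, hCδ⟩ := MS.exists_delta ε hε (MS.E (1 + 1 / p))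
      (MS.E_ne_zero _) (MS.E_ne_top _)
    obtain ⟨mu, hmu00, h1⟩ := h δ hδ
    obtain ⟨nu, hnufin, h2⟩ := hmu00.2 δ hδ
    refine ⟨nu, hnufin, ?_⟩
    calc morreyNorm d u p (lam - nu)
        = morreyNorm d u p ((lam - mu) + (mu - nu)) := by
          rw [sub_add_sub_cancel]
      _ ≤ MS.E (1 + 1 / p) * (morreyNorm d u p (lam - mu) + morreyNorm d u p (mu - nu)) :=
          MS.morreyNorm_add_le d u p hp _ _
      _ ≤ MS.E (1 + 1 / p) * (δ + δ) := mul_le_mul_right (add_le_add h1.le h2.le) _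
      _ < ε := hCδ
end

section
/- Let $0<p<u<\infty$ and let $\lambda\in m^{00}_{u,p}(\mathbb{Z}^d)$, the closure of the finitely supported sequences in $m_{u,p}(\mathbb{Z}^d)$. Then the supremum defining the norm is attained: there exists a dyadic cube $Q(\lambda)=Q_{-j_0,m_0}$ (with $j_0\in\mathbb{N}_0$, $m_0\in\mathbb{Z}^d$) such that $\|\lambda\,|\,m_{u,p}\| = |Q(\lambda)|^{1/u-1/p}\big(\sum_{k:\,Q_{0,k}\subset Q(\lambda)}|\lambda_k|^p\big)^{1/p}$. -/
open scoped ENNReal NNReal BigOperators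
open Filter

section MorreyAux

open Filter

private lemma rpow_two_add_le (r : ℝ) (hr : 0 ≤ r) (a b : ℝ≥0∞) :
    (a + b) ^ r ≤ 2 ^ r * (a ^ r + b ^ r) := by
  calc (a + b) ^ r ≤ (2 * (a ⊔ b)) ^ r := by
        apply ENNReal.rpow_le_rpow _ hr
        rw [two_mul]
        exact add_le_add le_sup_left le_sup_right
    _ = 2 ^ r * (a ⊔ b) ^ r := ENNReal.mul_rpow_of_nonneg _ _ hr
    _ ≤ 2 ^ r * (a ^ r + b ^ r) := by
        gcongr
        rcases le_total a b with h | h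
        · rw [sup_eq_right.2 h]; exact le_add_self
        · rw [sup_eq_left.2 h]; exact le_self_add

/-- One term of the Morrey norm supremum. -/
noncomputable def Fterm (d : ℕ) (u p : ℝ) (f : (Fin d → ℤ) → ℂ) (j : ℕ) (m : Fin d → ℤ) :
    ℝ≥0∞ :=
  ((2 : ℝ≥0∞) ^ (j * d)) ^ (1 / u - 1 / p) *
    (∑' k : {k : Fin d → ℤ // inDyadic d j m k}, (‖f k.1‖₊ : ℝ≥0∞) ^ p) ^ (1 / p)

private lemma Fterm_le_morreyNorm (d : ℕ) (u p : ℝ) (f : (Fin d → ℤ) → ℂ) (j : ℕ)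
    (m : Fin d → ℤ) : Fterm d u p f j m ≤ morreyNorm d u p f :=
  le_iSup₂ (f := fun j m => Fterm d u p f j m) j m

private lemma Fterm_quasi (d : ℕ) (u p : ℝ) (hp : 0 < p) (lam mu : (Fin d → ℤ) → ℂ)
    (j : ℕ) (m : Fin d → ℤ) :
    Fterm d u p lam j m ≤
      (2 * (2 : ℝ≥0∞) ^ (1 / p)) * (Fterm d u p mu j m + Fterm d u p (lam - mu) j m) := by
  have hip : (0:ℝ) ≤ 1 / p := by positivity
  set pref := ((2 : ℝ≥0∞) ^ (j * d)) ^ (1 / u - 1 / p) with hpref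
  set A := ∑' k : {k : Fin d → ℤ // inDyadic d j m k}, (‖mu k.1‖₊ : ℝ≥0∞) ^ p with hA
  set B := ∑' k : {k : Fin d → ℤ // inDyadic d j m k}, (‖(lam - mu) k.1‖₊ : ℝ≥0∞) ^ p with hB
  have hS : (∑' k : {k : Fin d → ℤ // inDyadic d j m k}, (‖lam k.1‖₊ : ℝ≥0∞) ^ p)
      ≤ 2 ^ p * (A + B) := by
    have hpt : ∀ k : {k : Fin d → ℤ // inDyadic d j m k},
        (‖lam k.1‖₊ : ℝ≥0∞) ^ p ≤
          2 ^ p * ((‖mu k.1‖₊ : ℝ≥0∞) ^ p + (‖(lam - mu) k.1‖₊ : ℝ≥0∞) ^ p) := by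
      intro k
      have h1 : (‖lam k.1‖₊ : ℝ≥0∞) ≤ (‖mu k.1‖₊ : ℝ≥0∞) + (‖(lam - mu) k.1‖₊ : ℝ≥0∞) := by
        have heq : lam k.1 = mu k.1 + (lam - mu) k.1 := by simp
        calc (‖lam k.1‖₊ : ℝ≥0∞) = (‖mu k.1 + (lam - mu) k.1‖₊ : ℝ≥0∞) := by rw [← heq]
          _ ≤ _ := by
              rw [← ENNReal.coe_add]
              exact_mod_cast nnnorm_add_le _ _
      calc (‖lam k.1‖₊ : ℝ≥0∞) ^ p
          ≤ ((‖mu k.1‖₊ : ℝ≥0∞) + (‖(lam - mu) k.1‖₊ : ℝ≥0∞)) ^ p :=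
            ENNReal.rpow_le_rpow h1 hp.le
        _ ≤ _ := rpow_two_add_le p hp.le _ _
    calc (∑' k : {k : Fin d → ℤ // inDyadic d j m k}, (‖lam k.1‖₊ : ℝ≥0∞) ^ p)
        ≤ ∑' k : {k : Fin d → ℤ // inDyadic d j m k},
            2 ^ p * ((‖mu k.1‖₊ : ℝ≥0∞) ^ p + (‖(lam - mu) k.1‖₊ : ℝ≥0∞) ^ p) :=
          ENNReal.tsum_le_tsum hpt
      _ = 2 ^ p * (A + B) := by rw [ENNReal.tsum_mul_left, ENNReal.tsum_add]
  have h2 : (∑' k : {k : Fin d → ℤ // inDyadic d j m k}, (‖lam k.1‖₊ : ℝ≥0∞) ^ p) ^ (1 / p)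
      ≤ 2 * ((A + B) ^ (1 / p)) := by
    calc (∑' k : {k : Fin d → ℤ // inDyadic d j m k}, (‖lam k.1‖₊ : ℝ≥0∞) ^ p) ^ (1 / p)
        ≤ (2 ^ p * (A + B)) ^ (1 / p) := ENNReal.rpow_le_rpow hS hip
      _ = ((2 : ℝ≥0∞) ^ p) ^ (1 / p) * (A + B) ^ (1 / p) :=
          ENNReal.mul_rpow_of_nonneg _ _ hip
      _ = 2 * (A + B) ^ (1 / p) := by
          rw [← ENNReal.rpow_mul, mul_one_div_cancel hp.ne', ENNReal.rpow_one]
  have h3 : (A + B) ^ (1 / p) ≤ 2 ^ (1 / p) * (A ^ (1 / p) + B ^ (1 / p)) :=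
    rpow_two_add_le _ hip _ _
  calc Fterm d u p lam j m
      = pref * (∑' k : {k : Fin d → ℤ // inDyadic d j m k}, (‖lam k.1‖₊ : ℝ≥0∞) ^ p) ^ (1 / p) :=
        rfl
    _ ≤ pref * (2 * ((2 : ℝ≥0∞) ^ (1 / p) * (A ^ (1 / p) + B ^ (1 / p)))) := by
        gcongr
        exact h2.trans (by gcongr)
    _ = (2 * (2 : ℝ≥0∞) ^ (1 / p)) * (pref * A ^ (1 / p) + pref * B ^ (1 / p)) := by ring
    _ = _ := rfl

end MorreyAux

theorem morrey00_norm_attained (d : ℕ) (u p : ℝ) (hp : 0 < p) (hpu : p < u)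
    (lam : (Fin d → ℤ) → ℂ) (hlam : MemMorrey00 d u p lam) :
    ∃ (j₀ : ℕ) (m₀ : Fin d → ℤ),
      morreyNorm d u p lam =
        ((2 : ℝ≥0∞) ^ (j₀ * d)) ^ (1 / u - 1 / p) *
          (∑' k : {k : Fin d → ℤ // inDyadic d j₀ m₀ k}, (‖lam k.1‖₊ : ℝ≥0∞) ^ p) ^ (1 / p) := by
  classical
  have hip : (0:ℝ) < 1 / p := by positivity
  have hθ : 1 / u - 1 / p < 0 := by
    have h1 : 1 / u < 1 / p := one_div_lt_one_div_of_lt hp hpu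
    linarith
  show ∃ j₀ m₀, morreyNorm d u p lam = Fterm d u p lam j₀ m₀
  rcases Nat.eq_zero_or_pos d with hd | hd
  · -- dimension zero: all terms are equal
    subst hd
    have htsum : ∀ (j : ℕ) (m : Fin 0 → ℤ),
        (∑' k : {k : Fin 0 → ℤ // inDyadic 0 j m k}, (‖lam k.1‖₊ : ℝ≥0∞) ^ p)
          = (‖lam (fun _ => 0)‖₊ : ℝ≥0∞) ^ p := by
      intro j m
      have hel : {k : Fin 0 → ℤ // inDyadic 0 j m k} := ⟨fun _ => 0, fun i => i.elim0⟩
      rw [tsum_eq_single hel (fun b hb => absurd (Subsingleton.elim b hel) hb)]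
      exact congrArg (fun z => (‖lam z‖₊ : ℝ≥0∞) ^ p) (Subsingleton.elim _ _)
    have hconst : ∀ (j : ℕ) (m : Fin 0 → ℤ),
        Fterm 0 u p lam j m = Fterm 0 u p lam 0 (fun _ => 0) := by
      intro j m
      unfold Fterm
      rw [htsum, htsum]
      simp
    refine ⟨0, fun _ => 0, ?_⟩
    show (⨆ j, ⨆ m, Fterm 0 u p lam j m) = Fterm 0 u p lam 0 (fun _ => 0)
    simp only [hconst, iSup_const]
  · -- main case `d ≥ 1`
    have hNtop : morreyNorm d u p lam ≠ ⊤ := hlam.1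
    by_cases hN0 : morreyNorm d u p lam = 0
    · refine ⟨0, fun _ => 0, ?_⟩
      have h1 := Fterm_le_morreyNorm d u p lam 0 (fun _ => 0)
      rw [hN0] at h1 ⊢
      exact (le_zero_iff.mp h1).symm
    · set C := 2 * (2 : ℝ≥0∞) ^ (1 / p) with hCdef
      have hC0 : C ≠ 0 := by
        apply mul_ne_zero two_ne_zero
        simp [ENNReal.rpow_eq_zero_iff]
      have hCt : C ≠ ⊤ :=
        ENNReal.mul_ne_top ENNReal.ofNat_ne_top
          (ENNReal.rpow_ne_top_of_nonneg hip.le ENNReal.ofNat_ne_top)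
      set δ := morreyNorm d u p lam / 2 / 2 / C with hδdef
      have hδ0 : δ ≠ 0 := by
        have h1 : morreyNorm d u p lam / 2 ≠ 0 := (ENNReal.div_pos hN0 ENNReal.ofNat_ne_top).ne'
        have h2 : morreyNorm d u p lam / 2 / 2 ≠ 0 := (ENNReal.div_pos h1 ENNReal.ofNat_ne_top).ne'
        exact (ENNReal.div_pos h2 hCt).ne'
      have hCδ : C * δ = morreyNorm d u p lam / 2 / 2 := by
        rw [hδdef]; exact ENNReal.mul_div_cancel hC0 hCt
      obtain ⟨mu, hmuf, hmuN⟩ := hlam.2 δ (pos_iff_ne_zero.mpr hδ0)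
      have hν : ∀ j m, Fterm d u p (lam - mu) j m ≤ δ :=
        fun j m => (Fterm_le_morreyNorm d u p (lam - mu) j m).trans hmuN.le
      set T := hmuf.toFinset with hTdef
      set M := ∑' k : Fin d → ℤ, (‖mu k‖₊ : ℝ≥0∞) ^ p with hMdef
      have hMsum : M = ∑ k ∈ T, (‖mu k‖₊ : ℝ≥0∞) ^ p := by
        apply tsum_eq_sum
        intro k hk
        have hz : mu k = 0 := Function.notMem_support.mp (fun h => hk (hmuf.mem_toFinset.mpr h))
        simp [hz, ENNReal.zero_rpow_of_pos hp]
      have hMtop : M ≠ ⊤ := by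
        rw [hMsum]
        exact (ENNReal.sum_lt_top.mpr fun k _ =>
          ENNReal.rpow_lt_top_of_nonneg hp.le ENNReal.coe_ne_top).ne
      have hMp : M ^ (1 / p) ≠ ⊤ := ENNReal.rpow_ne_top_of_nonneg hip.le hMtop
      have hSle : ∀ j m, (∑' k : {k : Fin d → ℤ // inDyadic d j m k},
          (‖mu k.1‖₊ : ℝ≥0∞) ^ p) ≤ M :=
        fun j m => ENNReal.tsum_comp_le_tsum_of_injective Subtype.val_injective
          (fun k => (‖mu k‖₊ : ℝ≥0∞) ^ p)
      set c := ((2 : ℝ≥0∞) ^ d) ^ (1 / u - 1 / p) with hcdef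
      have hpref : ∀ j : ℕ, ((2 : ℝ≥0∞) ^ (j * d)) ^ (1 / u - 1 / p) = c ^ j := by
        intro j
        rw [hcdef, mul_comm j d, pow_mul, ← ENNReal.rpow_natCast ((2 : ℝ≥0∞) ^ d) j,
          ← ENNReal.rpow_mul, mul_comm (j : ℝ) (1 / u - 1 / p), ENNReal.rpow_mul,
          ENNReal.rpow_natCast]
      have hc1 : c < 1 := by
        apply ENNReal.rpow_lt_one_of_one_lt_of_neg _ hθ
        exact one_lt_pow' (by norm_num) hd.ne'
      have hcj : Tendsto (fun j : ℕ => c ^ j * M ^ (1 / p)) atTop (nhds 0) := by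
        have h0 := ENNReal.tendsto_pow_atTop_nhds_zero_of_lt_one hc1
        have h1 := ENNReal.Tendsto.mul_const h0 (Or.inr hMp)
        simpa using h1
      obtain ⟨J, hJ⟩ := Filter.eventually_atTop.mp
        (hcj.eventually_lt_const (pos_iff_ne_zero.mpr hδ0))
      have hgm : ∀ (j : ℕ) (m k : Fin d → ℤ), inDyadic d j m k →
          m = fun i => k i / 2 ^ j := by
        intro j m k hk
        funext i
        obtain ⟨h1, h2⟩ := hk i
        have hpos : (0:ℤ) < 2 ^ j := by positivity
        refine le_antisymm ((Int.le_ediv_iff_mul_le hpos).mpr (by rw [mul_comm]; exact h1)) ?_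
        have h3 : k i / 2 ^ j < m i + 1 :=
          (Int.ediv_lt_iff_lt_mul hpos).mpr (by rw [mul_comm]; exact h2)
        omega
      have hFmu0 : ∀ (j : ℕ) (m : Fin d → ℤ),
          m ∉ T.image (fun k i => k i / 2 ^ j) → Fterm d u p mu j m = 0 := by
        intro j m hm
        have hs : ∀ k : {k : Fin d → ℤ // inDyadic d j m k}, (‖mu k.1‖₊ : ℝ≥0∞) ^ p = 0 := by
          intro k
          have hz : mu k.1 = 0 := by
            by_contra h
            exact hm (Finset.mem_image.mpr
              ⟨k.1, hmuf.mem_toFinset.mpr h, (hgm j m k.1 k.2).symm⟩)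
          simp [hz, ENNReal.zero_rpow_of_pos hp]
        show ((2 : ℝ≥0∞) ^ (j * d)) ^ (1 / u - 1 / p) *
          (∑' k : {k : Fin d → ℤ // inDyadic d j m k}, (‖mu k.1‖₊ : ℝ≥0∞) ^ p) ^ (1 / p) = 0
        rw [ENNReal.tsum_eq_zero.mpr hs, ENNReal.zero_rpow_of_pos hip, mul_zero]
      have hFmuJ : ∀ (j : ℕ) (m : Fin d → ℤ), J ≤ j → Fterm d u p mu j m ≤ δ := by
        intro j m hj
        have hb : Fterm d u p mu j m ≤ c ^ j * M ^ (1 / p) := by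
          show ((2 : ℝ≥0∞) ^ (j * d)) ^ (1 / u - 1 / p) *
            (∑' k : {k : Fin d → ℤ // inDyadic d j m k}, (‖mu k.1‖₊ : ℝ≥0∞) ^ p) ^ (1 / p)
              ≤ c ^ j * M ^ (1 / p)
          rw [hpref j]
          exact mul_le_mul_right (ENNReal.rpow_le_rpow (hSle j m) hip.le) _
        exact hb.trans (hJ j hj).le
      set U : Finset (Fin d → ℤ) :=
        (Finset.range J).biUnion (fun j => T.image (fun k i => k i / 2 ^ j)) with hUdef
      set B : Finset (ℕ × (Fin d → ℤ)) :=
        insert (0, fun _ => 0) ((Finset.range J) ×ˢ U) with hBdef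
      obtain ⟨⟨j₀, m₀⟩, hmem, hmax⟩ :=
        Finset.exists_max_image B (fun q => Fterm d u p lam q.1 q.2)
          ⟨_, Finset.mem_insert_self _ _⟩
      have hout : ∀ (j : ℕ) (m : Fin d → ℤ), (j, m) ∉ B →
          Fterm d u p lam j m ≤ morreyNorm d u p lam / 2 := by
        intro j m hjm
        have hmu : Fterm d u p mu j m ≤ δ := by
          by_cases hj : J ≤ j
          · exact hFmuJ j m hj
          · push_neg at hj
            have hmU : m ∉ U := fun hmU => hjm (Finset.mem_insert_of_mem
              (Finset.mem_product.mpr ⟨Finset.mem_range.mpr hj, hmU⟩))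
            have him : m ∉ T.image (fun k i => k i / 2 ^ j) := fun h =>
              hmU (Finset.mem_biUnion.mpr ⟨j, Finset.mem_range.mpr hj, h⟩)
            rw [hFmu0 j m him]
            exact zero_le
        calc Fterm d u p lam j m
            ≤ C * (Fterm d u p mu j m + Fterm d u p (lam - mu) j m) :=
              Fterm_quasi d u p hp lam mu j m
          _ ≤ C * (δ + δ) := mul_le_mul_right (add_le_add hmu (hν j m)) _
          _ = C * δ + C * δ := by ring
          _ = morreyNorm d u p lam / 2 / 2 + morreyNorm d u p lam / 2 / 2 := by rw [hCδ]
          _ = morreyNorm d u p lam / 2 := ENNReal.add_halves _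
      refine ⟨j₀, m₀, le_antisymm ?_ (Fterm_le_morreyNorm d u p lam j₀ m₀)⟩
      have hkey : ∀ (j : ℕ) (m : Fin d → ℤ),
          Fterm d u p lam j m ≤ max (Fterm d u p lam j₀ m₀) (morreyNorm d u p lam / 2) := by
        intro j m
        by_cases h : (j, m) ∈ B
        · exact le_max_of_le_left (hmax (j, m) h)
        · exact le_max_of_le_right (hout j m h)
      have hle : morreyNorm d u p lam ≤
          max (Fterm d u p lam j₀ m₀) (morreyNorm d u p lam / 2) :=
        iSup₂_le hkey
      rcases le_max_iff.mp hle with h | h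
      · exact h
      · exact absurd (h.trans_lt (ENNReal.half_lt_self hN0 hNtop)) (lt_irrefl _)
end

section
/- Let $0<p<u<\infty$, and let $\{w^{(n)}\}_{n\in\mathbb{N}}$ be a sequence in $m^{00}_{u,p}(\mathbb{Z}^d)$ converging weakly to zero. Then for every $\lambda\in m^{00}_{u,p}(\mathbb{Z}^d)$ one has $\limsup_{n\to\infty}\|\lambda+w^{(n)}\,|\,m_{u,p}\| = \max\big\{\|\lambda\,|\,m_{u,p}\|,\ \limsup_{n\to\infty}\|w^{(n)}\,|\,m_{u,p}\|\big\}$. -/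
open scoped ENNReal NNReal BigOperators
open Filter

section MorreyAux

variable {d : ℕ} {u p : ℝ}

/-- One term of the Morrey norm supremum. -/
noncomputable def mterm (d : ℕ) (u p : ℝ) (x : (Fin d → ℤ) → ℂ) (j : ℕ) (m : Fin d → ℤ) :
    ℝ≥0∞ :=
  ((2 : ℝ≥0∞) ^ (j * d)) ^ (1 / u - 1 / p) *
    (∑' k : {k : Fin d → ℤ // inDyadic d j m k}, (‖x k.1‖₊ : ℝ≥0∞) ^ p) ^ (1 / p)

lemma morreyNorm_eq_iSup (x : (Fin d → ℤ) → ℂ) :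
    morreyNorm d u p x = ⨆ (j : ℕ) (m : Fin d → ℤ), mterm d u p x j m := rfl

lemma mterm_le_morreyNorm (x : (Fin d → ℤ) → ℂ) (j : ℕ) (m : Fin d → ℤ) :
    mterm d u p x j m ≤ morreyNorm d u p x := by
  rw [morreyNorm_eq_iSup]
  exact le_iSup₂ (f := fun j m => mterm d u p x (j : ℕ) m) j m

lemma mrw1 {x : ℝ≥0∞} {r : ℝ} (hr : r ≠ 0) : (x ^ r) ^ (1/r) = x := by
  rw [← ENNReal.rpow_mul, mul_one_div, div_self hr, ENNReal.rpow_one]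

lemma mrw2 {x : ℝ≥0∞} {r : ℝ} (hr : r ≠ 0) : (x ^ (1/r)) ^ r = x := by
  rw [← ENNReal.rpow_mul, one_div_mul_cancel hr, ENNReal.rpow_one]

lemma mink_tsum {ι : Type*} (f g : ι → ℝ≥0∞) {r : ℝ} (hr : 1 ≤ r) :
    (∑' i, (f i + g i) ^ r) ^ (1/r) ≤ (∑' i, f i ^ r) ^ (1/r) + (∑' i, g i ^ r) ^ (1/r) := by
  have hr0 : (0:ℝ) < r := lt_of_lt_of_le one_pos hr
  set R := (∑' i, f i ^ r) ^ (1/r) + (∑' i, g i ^ r) ^ (1/r) with hR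
  have key : (∑' i, (f i + g i) ^ r) ≤ R ^ r := by
    rw [ENNReal.tsum_eq_iSup_sum]
    refine iSup_le fun s => ?_
    have h1 : (∑ i ∈ s, (f i + g i) ^ r) ^ (1/r) ≤ R := by
      refine (ENNReal.Lp_add_le s f g hr).trans (add_le_add ?_ ?_) <;>
        exact ENNReal.rpow_le_rpow (ENNReal.sum_le_tsum s) (by positivity)
    calc (∑ i ∈ s, (f i + g i) ^ r)
        = ((∑ i ∈ s, (f i + g i) ^ r) ^ (1/r)) ^ r := (mrw2 hr0.ne').symm
      _ ≤ R ^ r := ENNReal.rpow_le_rpow h1 hr0.le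
  calc (∑' i, (f i + g i) ^ r) ^ (1/r) ≤ (R ^ r) ^ (1/r) :=
        ENNReal.rpow_le_rpow key (by positivity)
    _ = R := mrw1 hr0.ne'

lemma inner_qsub {ι : Type*} (hp : 0 < p) (f g : ι → ℝ≥0∞) :
    ((∑' i, (f i + g i) ^ p) ^ (1/p)) ^ min p 1 ≤
      ((∑' i, f i ^ p) ^ (1/p)) ^ min p 1 + ((∑' i, g i ^ p) ^ (1/p)) ^ min p 1 := by
  rcases le_total p 1 with h1 | h1
  · rw [min_eq_left h1, mrw2 hp.ne', mrw2 hp.ne', mrw2 hp.ne']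
    refine le_trans (ENNReal.tsum_le_tsum fun i =>
      ENNReal.rpow_add_le_add_rpow (f i) (g i) hp.le h1) ?_
    rw [ENNReal.tsum_add]
  · rw [min_eq_right h1]
    simpa using mink_tsum f g h1

lemma mterm_congr (hp : 0 < p) {x y : (Fin d → ℤ) → ℂ} {j : ℕ} {m : Fin d → ℤ}
    (h : ∀ k, inDyadic d j m k → ‖x k‖₊ = ‖y k‖₊) :
    mterm d u p x j m = mterm d u p y j m := by
  unfold mterm
  congr 2
  exact tsum_congr fun k => by rw [h k.1 k.2]

lemma mterm_mono (hp : 0 < p) {x y : (Fin d → ℤ) → ℂ} (h : ∀ k, ‖x k‖₊ ≤ ‖y k‖₊)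
    (j : ℕ) (m : Fin d → ℤ) : mterm d u p x j m ≤ mterm d u p y j m := by
  unfold mterm
  gcongr with k
  exact h k.1

lemma morreyNorm_mono (hp : 0 < p) {x y : (Fin d → ℤ) → ℂ} (h : ∀ k, ‖x k‖₊ ≤ ‖y k‖₊) :
    morreyNorm d u p x ≤ morreyNorm d u p y :=
  iSup₂_mono (mterm_mono hp h)

lemma morreyNorm_congr (hp : 0 < p) {x y : (Fin d → ℤ) → ℂ} (h : ∀ k, ‖x k‖₊ = ‖y k‖₊) :
    morreyNorm d u p x = morreyNorm d u p y :=
  le_antisymm (morreyNorm_mono hp fun k => (h k).le) (morreyNorm_mono hp fun k => (h k).ge)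

lemma weight_eq (j : ℕ) : ((2 : ℝ≥0∞) ^ (j * d)) ^ (1 / u - 1 / p) =
    (((2:ℝ≥0∞) ^ d) ^ (1/u - 1/p : ℝ)) ^ j := by
  rw [pow_mul']
  rw [← ENNReal.rpow_natCast ((2:ℝ≥0∞)^d) j, ← ENNReal.rpow_mul, mul_comm,
    ENNReal.rpow_mul, ENNReal.rpow_natCast]

lemma weight_base_lt_one (hd : 0 < d) (he : 1/u - 1/p < 0) :
    ((2:ℝ≥0∞) ^ d) ^ (1/u - 1/p : ℝ) < 1 :=
  ENNReal.rpow_lt_one_of_one_lt_of_neg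
    (lt_of_lt_of_le ENNReal.one_lt_two (le_self_pow one_le_two hd.ne')) he

lemma weight_le_one (j : ℕ) (he : 1/u - 1/p < 0) :
    ((2 : ℝ≥0∞) ^ (j * d)) ^ (1 / u - 1 / p) ≤ 1 :=
  ENNReal.rpow_le_one_of_one_le_of_neg (one_le_pow_of_one_le' one_le_two _) he

lemma nnnorm_le_morreyNorm (hp : 0 < p) (x : (Fin d → ℤ) → ℂ) (k : Fin d → ℤ) :
    (‖x k‖₊ : ℝ≥0∞) ≤ morreyNorm d u p x := by
  have hk : inDyadic d 0 k k := by
    intro i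
    simp only [pow_zero, one_mul]
    exact ⟨le_rfl, by omega⟩
  have huniq : ∀ k' : {k' : Fin d → ℤ // inDyadic d 0 k k'}, k' = ⟨k, hk⟩ := by
    rintro ⟨k', hk'⟩
    refine Subtype.ext (funext fun i => ?_)
    show k' i = k i
    have h := hk' i
    simp only [pow_zero, one_mul] at h
    omega
  have htsum : (∑' k' : {k' : Fin d → ℤ // inDyadic d 0 k k'}, (‖x k'.1‖₊ : ℝ≥0∞) ^ p)
      = (‖x k‖₊ : ℝ≥0∞) ^ p := by
    rw [tsum_eq_single (⟨k, hk⟩ : {k' : Fin d → ℤ // inDyadic d 0 k k'})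
      (fun b hb => absurd (huniq b) hb)]
  have := mterm_le_morreyNorm (u := u) (p := p) x 0 k
  unfold mterm at this
  rwa [htsum, mrw1 hp.ne', Nat.zero_mul, pow_zero, ENNReal.one_rpow, one_mul] at this

lemma mterm_le_total (hp : 0 < p) (x : (Fin d → ℤ) → ℂ) (j : ℕ) (m : Fin d → ℤ) :
    mterm d u p x j m ≤ ((2 : ℝ≥0∞) ^ (j * d)) ^ (1 / u - 1 / p) *
      (∑' k : Fin d → ℤ, (‖x k‖₊ : ℝ≥0∞) ^ p) ^ (1/p) := by
  refine mul_le_mul_right (ENNReal.rpow_le_rpow ?_ (by positivity)) _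
  exact ENNReal.tsum_comp_le_tsum_of_injective Subtype.val_injective
    (fun k => (‖x k‖₊ : ℝ≥0∞) ^ p)

lemma morreyNorm_le_lp (hp : 0 < p) (he : 1/u - 1/p < 0) (x : (Fin d → ℤ) → ℂ) :
    morreyNorm d u p x ≤ (∑' k : Fin d → ℤ, (‖x k‖₊ : ℝ≥0∞) ^ p) ^ (1/p) := by
  rw [morreyNorm_eq_iSup]
  refine iSup₂_le fun j m => (mterm_le_total hp x j m).trans ?_
  exact mul_le_of_le_one_left zero_le (weight_le_one j he)

/-- Restriction of a sequence to a finite set of indices. -/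
def frestr (G : Finset (Fin d → ℤ)) (x : (Fin d → ℤ) → ℂ) : (Fin d → ℤ) → ℂ :=
  fun k => if k ∈ G then x k else 0

lemma frestr_nnnorm_le (G : Finset (Fin d → ℤ)) (x : (Fin d → ℤ) → ℂ) (k : Fin d → ℤ) :
    ‖frestr G x k‖₊ ≤ ‖x k‖₊ := by
  unfold frestr; split <;> simp

lemma tendsto_morrey_frestr (hp : 0 < p) (he : 1/u - 1/p < 0)
    (w : ℕ → (Fin d → ℤ) → ℂ) (G : Finset (Fin d → ℤ))
    (h : ∀ k, Tendsto (fun n => w n k) atTop (nhds 0)) :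
    Tendsto (fun n => morreyNorm d u p (frestr G (w n))) atTop (nhds 0) := by
  have hbd : ∀ n, morreyNorm d u p (frestr G (w n)) ≤
      (∑ k ∈ G, (‖w n k‖₊ : ℝ≥0∞) ^ p) ^ (1/p) := by
    intro n
    refine (morreyNorm_le_lp hp he _).trans (le_of_eq ?_)
    congr 1
    refine tsum_eq_sum (fun k hk => ?_) |>.trans (Finset.sum_congr rfl fun k hk => ?_)
    · simp only [frestr, if_neg hk, nnnorm_zero, ENNReal.coe_zero]
      exact ENNReal.zero_rpow_of_pos hp
    · simp only [frestr, if_pos hk]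
  have hlim : Tendsto (fun n => (∑ k ∈ G, (‖w n k‖₊ : ℝ≥0∞) ^ p) ^ (1/p)) atTop (nhds 0) := by
    have hsum : Tendsto (fun n => ∑ k ∈ G, (‖w n k‖₊ : ℝ≥0∞) ^ p) atTop (nhds 0) := by
      have h' : Tendsto (fun n => ∑ k ∈ G, (‖w n k‖₊ : ℝ≥0∞) ^ p) atTop
          (nhds (∑ k ∈ G, (0:ℝ≥0∞))) := by
        refine tendsto_finset_sum G fun k _ => ?_
        have h1 : Tendsto (fun n => (‖w n k‖₊ : ℝ≥0∞)) atTop (nhds 0) := by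
          rw [← ENNReal.coe_zero]
          exact ENNReal.tendsto_coe.2 (by simpa using (h k).nnnorm)
        have h2 := (ENNReal.continuous_rpow_const (y := p)).tendsto (0 : ℝ≥0∞)
        have h3 := h2.comp h1
        rwa [ENNReal.zero_rpow_of_pos hp] at h3
      simpa using h'
    have h2 := (ENNReal.continuous_rpow_const (y := 1/p)).tendsto (0 : ℝ≥0∞)
    have h3 := h2.comp hsum
    rwa [ENNReal.zero_rpow_of_pos (by positivity)] at h3
  exact tendsto_of_tendsto_of_tendsto_of_le_of_le tendsto_const_nhds hlim
    (fun n => zero_le) hbd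

lemma gap_helper {x c : ℝ≥0∞} (hxc : x < c) (hc : c ≠ ⊤) :
    ∃ η : ℝ≥0∞, 0 < η ∧ η ≠ ⊤ ∧ x + (η + η + η + η) ≤ c := by
  refine ⟨(c - x) / 4, ?_, ?_, ?_⟩
  · exact ENNReal.div_pos (tsub_pos_of_lt hxc).ne' (by norm_num)
  · rw [ENNReal.div_eq_inv_mul]
    exact ENNReal.mul_ne_top (by simp) (ne_top_of_le_ne_top hc tsub_le_self)
  · have h4 : (c - x) / 4 + (c - x) / 4 + (c - x) / 4 + (c - x) / 4 = 4 * ((c - x) / 4) := by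
      ring
    rw [h4]
    calc x + 4 * ((c - x) / 4) ≤ x + (c - x) := add_le_add_right ENNReal.mul_div_le x
      _ = c := add_tsub_cancel_of_le hxc.le

lemma mterm_add (hp : 0 < p) (x y : (Fin d → ℤ) → ℂ) (j : ℕ) (m : Fin d → ℤ) :
    mterm d u p (x + y) j m ^ min p 1 ≤
      mterm d u p x j m ^ min p 1 + mterm d u p y j m ^ min p 1 := by
  have hq0 : (0:ℝ) < min p 1 := lt_min hp one_pos
  unfold mterm
  rw [ENNReal.mul_rpow_of_nonneg _ _ hq0.le, ENNReal.mul_rpow_of_nonneg _ _ hq0.le,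
    ENNReal.mul_rpow_of_nonneg _ _ hq0.le, ← mul_add]
  refine mul_le_mul_right ?_ _
  have h1 : ((∑' k : {k : Fin d → ℤ // inDyadic d j m k},
        (‖(x + y) k.1‖₊ : ℝ≥0∞) ^ p) ^ (1/p)) ^ min p 1 ≤
      ((∑' k : {k : Fin d → ℤ // inDyadic d j m k},
        ((‖x k.1‖₊ : ℝ≥0∞) + (‖y k.1‖₊ : ℝ≥0∞)) ^ p) ^ (1/p)) ^ min p 1 := by
    gcongr with k
    calc (‖(x + y) k.1‖₊ : ℝ≥0∞) = (‖x k.1 + y k.1‖₊ : ℝ≥0∞) := by simp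
      _ ≤ ((‖x k.1‖₊ + ‖y k.1‖₊ : ℝ≥0) : ℝ≥0∞) := ENNReal.coe_le_coe.2 (nnnorm_add_le _ _)
      _ = (‖x k.1‖₊ : ℝ≥0∞) + (‖y k.1‖₊ : ℝ≥0∞) := ENNReal.coe_add _ _
  exact h1.trans (inner_qsub hp _ _)

lemma morrey_qadd (hp : 0 < p) (x y : (Fin d → ℤ) → ℂ) :
    morreyNorm d u p (x + y) ^ min p 1 ≤
      morreyNorm d u p x ^ min p 1 + morreyNorm d u p y ^ min p 1 := by
  have hq0 : (0:ℝ) < min p 1 := lt_min hp one_pos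
  have h : morreyNorm d u p (x + y) ≤
      (morreyNorm d u p x ^ min p 1 + morreyNorm d u p y ^ min p 1) ^ (1/(min p 1)) := by
    rw [morreyNorm_eq_iSup]
    refine iSup₂_le fun j m => ?_
    have h1 : mterm d u p (x + y) j m ^ min p 1 ≤
        morreyNorm d u p x ^ min p 1 + morreyNorm d u p y ^ min p 1 :=
      (mterm_add hp x y j m).trans (add_le_add
        (ENNReal.rpow_le_rpow (mterm_le_morreyNorm x j m) hq0.le)
        (ENNReal.rpow_le_rpow (mterm_le_morreyNorm y j m) hq0.le))
    calc mterm d u p (x + y) j m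
        = ((mterm d u p (x + y) j m ^ min p 1) ^ (1/min p 1)) := (mrw1 hq0.ne').symm
      _ ≤ _ := ENNReal.rpow_le_rpow h1 (by positivity)
  calc morreyNorm d u p (x + y) ^ min p 1
      ≤ ((morreyNorm d u p x ^ min p 1 + morreyNorm d u p y ^ min p 1) ^ (1/min p 1)) ^ min p 1 :=
        ENNReal.rpow_le_rpow h hq0.le
    _ = _ := mrw2 hq0.ne'

lemma morrey_qadd_of_eq (hp : 0 < p) {z x y : (Fin d → ℤ) → ℂ} (hz : z = x + y) :
    morreyNorm d u p z ^ min p 1 ≤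
      morreyNorm d u p x ^ min p 1 + morreyNorm d u p y ^ min p 1 := by
  rw [hz]; exact morrey_qadd hp x y

lemma core_est (hp : 0 < p) (μ σ : (Fin d → ℤ) → ℂ) (G : Finset (Fin d → ℤ)) (ε : ℝ≥0∞)
    (htri : ∀ (j : ℕ) (m : Fin d → ℤ),
      mterm d u p μ j m ≤ ε ∨ (∀ k, inDyadic d j m k → k ∈ G) ∨
        (∀ k, inDyadic d j m k → μ k = 0)) :
    morreyNorm d u p (μ + σ) ^ min p 1 ≤
      max (morreyNorm d u p μ ^ min p 1) (morreyNorm d u p σ ^ min p 1) + ε ^ min p 1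
        + morreyNorm d u p (frestr G σ) ^ min p 1 := by
  have hq0 : (0:ℝ) < min p 1 := lt_min hp one_pos
  set q := min p 1
  set B := max (morreyNorm d u p μ ^ q) (morreyNorm d u p σ ^ q) with hB
  set RHS := B + ε ^ q + morreyNorm d u p (frestr G σ) ^ q with hRHS
  have key : ∀ (j : ℕ) (m : Fin d → ℤ), mterm d u p (μ + σ) j m ^ q ≤ RHS := by
    intro j m
    rcases htri j m with h | h | h
    · calc mterm d u p (μ + σ) j m ^ q
          ≤ mterm d u p μ j m ^ q + mterm d u p σ j m ^ q := mterm_add hp μ σ j m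
        _ ≤ ε ^ q + B := add_le_add (ENNReal.rpow_le_rpow h hq0.le)
            (le_max_right _ _ |>.trans' (ENNReal.rpow_le_rpow (mterm_le_morreyNorm σ j m) hq0.le))
        _ = B + ε ^ q := add_comm _ _
        _ ≤ RHS := le_self_add
    · have heq : mterm d u p (μ + σ) j m = mterm d u p (μ + frestr G σ) j m := by
        refine mterm_congr hp fun k hk => ?_
        have hG : frestr G σ k = σ k := by unfold frestr; rw [if_pos (h k hk)]
        simp [hG]
      rw [heq]
      calc mterm d u p (μ + frestr G σ) j m ^ q
          ≤ mterm d u p μ j m ^ q + mterm d u p (frestr G σ) j m ^ q := mterm_add hp _ _ j m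
        _ ≤ morreyNorm d u p μ ^ q + morreyNorm d u p (frestr G σ) ^ q :=
            add_le_add (ENNReal.rpow_le_rpow (mterm_le_morreyNorm _ j m) hq0.le)
              (ENNReal.rpow_le_rpow (mterm_le_morreyNorm _ j m) hq0.le)
        _ ≤ (B + ε ^ q) + morreyNorm d u p (frestr G σ) ^ q :=
            add_le_add_left ((le_max_left _ _).trans le_self_add) _
        _ = RHS := rfl
    · have heq : mterm d u p (μ + σ) j m = mterm d u p σ j m := by
        refine mterm_congr hp fun k hk => ?_
        simp [h k hk]
      rw [heq]
      calc mterm d u p σ j m ^ q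
          ≤ morreyNorm d u p σ ^ q := ENNReal.rpow_le_rpow (mterm_le_morreyNorm _ j m) hq0.le
        _ ≤ B := le_max_right _ _
        _ ≤ RHS := le_self_add.trans le_self_add
  have h2 : morreyNorm d u p (μ + σ) ≤ RHS ^ (1/q) := by
    rw [morreyNorm_eq_iSup]
    refine iSup₂_le fun j m => ?_
    calc mterm d u p (μ + σ) j m = (mterm d u p (μ + σ) j m ^ q) ^ (1/q) := (mrw1 hq0.ne').symm
      _ ≤ RHS ^ (1/q) := ENNReal.rpow_le_rpow (key j m) (by positivity)
  calc morreyNorm d u p (μ + σ) ^ q ≤ (RHS ^ (1/q)) ^ q := ENNReal.rpow_le_rpow h2 hq0.le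
    _ = RHS := mrw2 hq0.ne'

lemma build_tri (hp : 0 < p) (he : 1/u - 1/p < 0) (μ : (Fin d → ℤ) → ℂ)
    (hfin : (Function.support μ).Finite) (ε : ℝ≥0∞) (hε0 : 0 < ε) :
    ∃ G : Finset (Fin d → ℤ), ∀ (j : ℕ) (m : Fin d → ℤ),
      mterm d u p μ j m ≤ ε ∨ (∀ k, inDyadic d j m k → k ∈ G) ∨
        (∀ k, inDyadic d j m k → μ k = 0) := by
  by_cases hd : d = 0
  · refine ⟨{fun _ => 0}, fun j m => Or.inr (Or.inl fun k hk => ?_)⟩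
    simp only [Finset.mem_singleton]
    funext i
    exact absurd i.isLt (by omega)
  · set F := hfin.toFinset with hF
    set T := (∑' k : Fin d → ℤ, (‖μ k‖₊ : ℝ≥0∞) ^ p) ^ (1/p) with hT
    have hsum : (∑' k : Fin d → ℤ, (‖μ k‖₊ : ℝ≥0∞) ^ p) = ∑ k ∈ F, (‖μ k‖₊ : ℝ≥0∞) ^ p := by
      refine tsum_eq_sum fun k hk => ?_
      have hk0 : μ k = 0 := by
        by_contra h
        exact hk (hfin.mem_toFinset.2 (Function.mem_support.2 h))
      simp [hk0, ENNReal.zero_rpow_of_pos hp]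
    have hTne : T ≠ ⊤ := by
      rw [hT, hsum]
      refine ENNReal.rpow_ne_top_of_nonneg (by positivity) ?_
      exact (ENNReal.sum_lt_top.2 fun k _ =>
        (ENNReal.rpow_ne_top_of_nonneg hp.le ENNReal.coe_ne_top).lt_top).ne
    set W := ((2:ℝ≥0∞) ^ d) ^ (1/u - 1/p : ℝ) with hW
    have hW1 : W < 1 := weight_base_lt_one (Nat.pos_of_ne_zero hd) he
    have htend : Tendsto (fun j : ℕ => W ^ j * T) atTop (nhds 0) := by
      have h0 := ENNReal.tendsto_pow_atTop_nhds_zero_of_lt_one hW1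
      have h1 := ENNReal.Tendsto.mul_const h0 (Or.inr hTne)
      simpa using h1
    obtain ⟨N, hN⟩ := eventually_atTop.1 (htend.eventually_lt_const hε0)
    set B0 : ℕ := F.sup fun k => Finset.univ.sup fun i => (k i).natAbs with hB0
    refine ⟨Finset.Icc (fun _ => -((B0:ℤ) + 2^N)) (fun _ => (B0:ℤ) + 2^N), fun j m => ?_⟩
    by_cases hjN : N ≤ j
    · left
      calc mterm d u p μ j m
          ≤ ((2 : ℝ≥0∞) ^ (j * d)) ^ (1 / u - 1 / p) * T := mterm_le_total hp μ j m
        _ = W ^ j * T := by rw [weight_eq]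
        _ ≤ W ^ N * T :=
            mul_le_mul_left (pow_le_pow_of_le_one zero_le hW1.le hjN) T
        _ ≤ ε := (hN N le_rfl).le
    · push_neg at hjN
      by_cases hmeet : ∃ k₀, inDyadic d j m k₀ ∧ μ k₀ ≠ 0
      · obtain ⟨k₀, hk₀, hμk₀⟩ := hmeet
        right; left
        intro k hk
        have hb : ∀ i, |k i| ≤ (B0:ℤ) + 2^N := by
          intro i
          have h1 := hk i
          have h2 := hk₀ i
          have hexp : (2:ℤ)^j * (m i + 1) = 2^j * m i + 2^j := by ring
          have h1a := h1.1
          have h1b := h1.2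
          have h2a := h2.1
          have h2b := h2.2
          rw [hexp] at h1b h2b
          have hdiff : |k i - k₀ i| < 2^j := by
            rw [abs_sub_lt_iff]
            constructor <;> linarith
          have hk₀F : k₀ ∈ F := hfin.mem_toFinset.2 (Function.mem_support.2 hμk₀)
          have hB1 : (k₀ i).natAbs ≤ Finset.univ.sup fun i => (k₀ i).natAbs :=
            Finset.le_sup (f := fun i => (k₀ i).natAbs) (Finset.mem_univ i)
          have hB2 : (Finset.univ.sup fun i => (k₀ i).natAbs) ≤ B0 :=
            Finset.le_sup (f := fun k => Finset.univ.sup fun i => (k i).natAbs) hk₀F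
          have hB : ((k₀ i).natAbs : ℕ) ≤ B0 := le_trans hB1 hB2
          have hk₀b : |k₀ i| ≤ (B0:ℤ) := by
            rw [Int.abs_eq_natAbs]
            exact_mod_cast hB
          have hjn : (2:ℤ)^j ≤ 2^N := pow_le_pow_right₀ (by norm_num) hjN.le
          calc |k i| = |k₀ i + (k i - k₀ i)| := by congr 1; ring
            _ ≤ |k₀ i| + |k i - k₀ i| := abs_add_le _ _
            _ ≤ (B0:ℤ) + 2^N := add_le_add hk₀b (le_trans hdiff.le hjn)
        rw [Finset.mem_Icc]
        constructor <;> (rw [Pi.le_def]; intro i)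
        · exact neg_le_of_abs_le (hb i)
        · exact le_of_abs_le (hb i)
      · push_neg at hmeet
        exact Or.inr (Or.inr fun k hk => hmeet k hk)

end MorreyAux

theorem morrey00_weak_null_limsup (d : ℕ) (u p : ℝ) (hp : 0 < p) (hpu : p < u)
    (w : ℕ → (Fin d → ℤ) → ℂ) (hw : ∀ n, MemMorrey00 d u p (w n))
    (hweak : ∀ f : ((Fin d → ℤ) → ℂ) → ℂ,
      (∀ lam mu : (Fin d → ℤ) → ℂ, MemMorrey00 d u p lam → MemMorrey00 d u p mu →
        f (lam + mu) = f lam + f mu) →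
      (∀ (c : ℂ) (lam : (Fin d → ℤ) → ℂ), MemMorrey00 d u p lam → f (c • lam) = c * f lam) →
      (∃ C : ℝ≥0∞, C ≠ ⊤ ∧ ∀ lam : (Fin d → ℤ) → ℂ, MemMorrey00 d u p lam →
        (‖f lam‖₊ : ℝ≥0∞) ≤ C * morreyNorm d u p lam) →
      Tendsto (fun n => f (w n)) atTop (nhds 0))
    (lam : (Fin d → ℤ) → ℂ) (hlam : MemMorrey00 d u p lam) :
    Filter.limsup (fun n => morreyNorm d u p (lam + w n)) atTop =
      max (morreyNorm d u p lam) (Filter.limsup (fun n => morreyNorm d u p (w n)) atTop) := by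
  classical
  have he : 1/u - 1/p < 0 := sub_neg.2 (one_div_lt_one_div_of_lt hp hpu)
  have hq0 : (0:ℝ) < min p 1 := lt_min hp one_pos
  set q := min p 1 with hqdef
  -- pointwise weak convergence
  have hptw : ∀ k, Tendsto (fun n => w n k) atTop (nhds 0) := by
    intro k
    have := hweak (fun x => x k) (fun a b _ _ => rfl) (fun c a _ => rfl)
      ⟨1, ENNReal.one_ne_top, fun x _ => by
        rw [one_mul]; exact nnnorm_le_morreyNorm hp x k⟩
    simpa using this
  set L := Filter.limsup (fun n => morreyNorm d u p (lam + w n)) atTop with hLdef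
  set A := Filter.limsup (fun n => morreyNorm d u p (w n)) atTop with hAdef
  have hmono : Monotone (fun a : ℝ≥0∞ => a ^ q) := fun a b h => ENNReal.rpow_le_rpow h hq0.le
  -- Part I : upper bound
  have upper : L ≤ max (morreyNorm d u p lam) A := by
    by_contra hcon
    rw [not_le] at hcon
    obtain ⟨c, hc1, hc2⟩ := exists_between hcon
    have hcne : c ≠ ⊤ := hc2.ne_top
    obtain ⟨hMc, hAc⟩ := max_lt_iff.1 hc1
    obtain ⟨b, hAb, hbc⟩ := exists_between hAc
    have hxc : max (morreyNorm d u p lam) b < c := max_lt hMc hbc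
    have hxq : (max (morreyNorm d u p lam) b) ^ q < c ^ q := ENNReal.rpow_lt_rpow hxc hq0
    have hcq : c ^ q ≠ ⊤ := ENNReal.rpow_ne_top_of_nonneg hq0.le hcne
    obtain ⟨η, hη0, hηt, hηc⟩ := gap_helper hxq hcq
    set ε := η ^ (1/q) with hεdef
    have hε0 : 0 < ε := ENNReal.rpow_pos hη0 hηt
    have hεq : ε ^ q = η := mrw2 hq0.ne'
    obtain ⟨μ, hμfin, hμε⟩ := hlam.2 ε hε0
    obtain ⟨G, htri⟩ := build_tri hp he μ hμfin ε hε0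
    have hδ : Tendsto (fun n => morreyNorm d u p (frestr G (w n))) atTop (nhds 0) :=
      tendsto_morrey_frestr hp he w G hptw
    have hev1 : ∀ᶠ n in atTop, morreyNorm d u p (w n) < b := eventually_lt_of_limsup_lt hAb
    have hev2 : ∀ᶠ n in atTop, morreyNorm d u p (frestr G (w n)) < ε :=
      hδ.eventually_lt_const hε0
    have hev : ∀ᶠ n in atTop, morreyNorm d u p (lam + w n) ≤ c := by
      filter_upwards [hev1, hev2] with n h1 h2
      have e1 : morreyNorm d u p (lam + w n) ^ q ≤
          morreyNorm d u p (lam - μ) ^ q + morreyNorm d u p (μ + w n) ^ q :=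
        morrey_qadd_of_eq hp (by ring)
      have e2 : morreyNorm d u p (μ + w n) ^ q ≤
          max (morreyNorm d u p μ ^ q) (morreyNorm d u p (w n) ^ q) + ε ^ q
            + morreyNorm d u p (frestr G (w n)) ^ q :=
        core_est hp μ (w n) G ε htri
      have hmulam : morreyNorm d u p (μ - lam) = morreyNorm d u p (lam - μ) :=
        morreyNorm_congr hp fun k => by
          show ‖(μ - lam) k‖₊ = ‖(lam - μ) k‖₊
          rw [Pi.sub_apply, Pi.sub_apply, ← nnnorm_neg, neg_sub]
      have hlamμ : morreyNorm d u p (lam - μ) ^ q ≤ η := by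
        rw [← hεq]; exact ENNReal.rpow_le_rpow hμε.le hq0.le
      have e3 : morreyNorm d u p μ ^ q ≤ morreyNorm d u p lam ^ q + η := by
        refine (morrey_qadd_of_eq hp (show μ = lam + (μ - lam) by ring)).trans ?_
        refine add_le_add_right ?_ _
        rw [hmulam]; exact hlamμ
      have hwb : morreyNorm d u p (w n) ^ q ≤ b ^ q := ENNReal.rpow_le_rpow h1.le hq0.le
      have hgn : morreyNorm d u p (frestr G (w n)) ^ q ≤ η := by
        rw [← hεq]; exact ENNReal.rpow_le_rpow h2.le hq0.le
      have s1 : max (morreyNorm d u p μ ^ q) (morreyNorm d u p (w n) ^ q) ≤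
          max (morreyNorm d u p lam ^ q) (b ^ q) + η := by
        refine max_le ?_ ?_
        · exact e3.trans (add_le_add_left (le_max_left _ _) η)
        · exact (hwb.trans (le_max_right _ _)).trans le_self_add
      have final : morreyNorm d u p (lam + w n) ^ q ≤ c ^ q := by
        calc morreyNorm d u p (lam + w n) ^ q
            ≤ morreyNorm d u p (lam - μ) ^ q + morreyNorm d u p (μ + w n) ^ q := e1
          _ ≤ η + ((max (morreyNorm d u p lam ^ q) (b ^ q) + η) + η + η) :=
              add_le_add hlamμ (e2.trans (add_le_add (add_le_add s1 (le_of_eq hεq)) hgn))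
          _ = max (morreyNorm d u p lam ^ q) (b ^ q) + (η + η + η + η) := by ring
          _ = (max (morreyNorm d u p lam) b) ^ q + (η + η + η + η) := by rw [hmono.map_max]
          _ ≤ c ^ q := hηc
      exact (ENNReal.rpow_le_rpow_iff hq0).1 final
    have hle : L ≤ c := limsup_le_of_le (by isBoundedDefault) hev
    exact absurd hle (not_le.2 hc2)
  -- Part IIa : morreyNorm lam ≤ L
  have lower1 : morreyNorm d u p lam ≤ L := by
    by_contra hcon
    rw [not_le] at hcon
    obtain ⟨c, hc1, hc2⟩ := exists_between hcon
    have hcne : c ≠ ⊤ := hc2.ne_top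
    have hlt : c ^ q < morreyNorm d u p lam ^ q := ENNReal.rpow_lt_rpow hc2 hq0
    have hMq : morreyNorm d u p lam ^ q ≠ ⊤ := ENNReal.rpow_ne_top_of_nonneg hq0.le hlam.1
    obtain ⟨η, hη0, hηt, hηc⟩ := gap_helper hlt hMq
    set ε := η ^ (1/q) with hεdef
    have hε0 : 0 < ε := ENNReal.rpow_pos hη0 hηt
    have hεq : ε ^ q = η := mrw2 hq0.ne'
    obtain ⟨μ, hμfin, hμε⟩ := hlam.2 ε hε0
    set F := hμfin.toFinset with hFdef
    have hδ : Tendsto (fun n => morreyNorm d u p (frestr F (w n))) atTop (nhds 0) :=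
      tendsto_morrey_frestr hp he w F hptw
    have hev1 : ∀ᶠ n in atTop, morreyNorm d u p (lam + w n) < c :=
      eventually_lt_of_limsup_lt hc1
    have hev2 : ∀ᶠ n in atTop, morreyNorm d u p (frestr F (w n)) < ε :=
      hδ.eventually_lt_const hε0
    obtain ⟨n, h1, h2⟩ := (hev1.and hev2).exists
    have hmulam : morreyNorm d u p (μ - lam) = morreyNorm d u p (lam - μ) :=
      morreyNorm_congr hp fun k => by
        show ‖(μ - lam) k‖₊ = ‖(lam - μ) k‖₊
        rw [Pi.sub_apply, Pi.sub_apply, ← nnnorm_neg, neg_sub]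
    have hlamμ : morreyNorm d u p (lam - μ) ^ q ≤ η := by
      rw [← hεq]; exact ENNReal.rpow_le_rpow hμε.le hq0.le
    have hFn : morreyNorm d u p (frestr F (w n)) ^ q ≤ η := by
      rw [← hεq]; exact ENNReal.rpow_le_rpow h2.le hq0.le
    have e1 : morreyNorm d u p lam ^ q ≤
        morreyNorm d u p (lam - μ) ^ q + morreyNorm d u p μ ^ q :=
      morrey_qadd_of_eq hp (by ring)
    have hμeq : μ = frestr F (μ + w n) + (-(frestr F (w n))) := by
      funext k
      by_cases hk : k ∈ F
      · simp only [frestr, Pi.add_apply, Pi.neg_apply, if_pos hk]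
        ring
      · have hk0 : μ k = 0 := by
          by_contra h
          exact hk (hμfin.mem_toFinset.2 (Function.mem_support.2 h))
        simp only [frestr, Pi.add_apply, Pi.neg_apply, if_neg hk, hk0]
        ring
    have e2 : morreyNorm d u p μ ^ q ≤
        morreyNorm d u p (frestr F (μ + w n)) ^ q + morreyNorm d u p (frestr F (w n)) ^ q := by
      refine (morrey_qadd_of_eq hp hμeq).trans (add_le_add_right (le_of_eq ?_) _)
      refine congrArg (· ^ q) (morreyNorm_congr hp fun k => ?_)
      show ‖(-(frestr F (w n))) k‖₊ = ‖frestr F (w n) k‖₊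
      simp
    have e3 : morreyNorm d u p (frestr F (μ + w n)) ≤ morreyNorm d u p (μ + w n) :=
      morreyNorm_mono hp (frestr_nnnorm_le F _)
    have e4 : morreyNorm d u p (μ + w n) ^ q ≤
        morreyNorm d u p (lam + w n) ^ q + morreyNorm d u p (μ - lam) ^ q :=
      morrey_qadd_of_eq hp (by ring)
    have hcn : morreyNorm d u p (lam + w n) ^ q ≤ c ^ q := ENNReal.rpow_le_rpow h1.le hq0.le
    have hsum : morreyNorm d u p lam ^ q ≤ c ^ q + (η + η + η) := by
      calc morreyNorm d u p lam ^ q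
          ≤ morreyNorm d u p (lam - μ) ^ q + morreyNorm d u p μ ^ q := e1
        _ ≤ η + (((morreyNorm d u p (lam + w n) ^ q + η)) + η) := by
            refine add_le_add hlamμ (e2.trans (add_le_add ?_ hFn))
            refine (ENNReal.rpow_le_rpow e3 hq0.le).trans (e4.trans ?_)
            rw [hmulam]
            exact add_le_add_right hlamμ _
        _ = morreyNorm d u p (lam + w n) ^ q + (η + η + η) := by ring
        _ ≤ c ^ q + (η + η + η) := add_le_add_left hcn _
    have h3t : η + η + η ≠ ⊤ := by
      simp [hηt, ENNReal.add_ne_top]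
    have hcontr : c ^ q + (η + η + η) < c ^ q + (η + η + η + η) :=
      ENNReal.add_lt_add_left (ENNReal.rpow_ne_top_of_nonneg hq0.le hcne)
        (ENNReal.lt_add_right h3t hη0.ne')
    exact absurd ((hsum.trans_lt hcontr).trans_le hηc) (lt_irrefl _)
  -- Part IIb : A ≤ L
  have lower2 : A ≤ L := by
    by_contra hcon
    rw [not_le] at hcon
    obtain ⟨c, hc1, hc2⟩ := exists_between hcon
    have hcne : c ≠ ⊤ := hc2.ne_top
    obtain ⟨c', hc1', hc2'⟩ := exists_between hc1
    have hlt : c' ^ q < c ^ q := ENNReal.rpow_lt_rpow hc2' hq0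
    have hcq : c ^ q ≠ ⊤ := ENNReal.rpow_ne_top_of_nonneg hq0.le hcne
    obtain ⟨η, hη0, hηt, hηc⟩ := gap_helper hlt hcq
    set ε := η ^ (1/q) with hεdef
    have hε0 : 0 < ε := ENNReal.rpow_pos hη0 hηt
    have hεq : ε ^ q = η := mrw2 hq0.ne'
    obtain ⟨μ, hμfin, hμε⟩ := hlam.2 ε hε0
    set F := hμfin.toFinset with hFdef
    have hδ : Tendsto (fun n => morreyNorm d u p (frestr F (w n))) atTop (nhds 0) :=
      tendsto_morrey_frestr hp he w F hptw
    have hev1 : ∀ᶠ n in atTop, morreyNorm d u p (lam + w n) < c' :=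
      eventually_lt_of_limsup_lt hc1'
    have hev2 : ∀ᶠ n in atTop, morreyNorm d u p (frestr F (w n)) < ε :=
      hδ.eventually_lt_const hε0
    have hfreq : ∃ᶠ n in atTop, c < morreyNorm d u p (w n) :=
      frequently_lt_of_lt_limsup (by isBoundedDefault) hc2
    obtain ⟨n, h0, h1, h2⟩ := (hfreq.and_eventually (hev1.and hev2)).exists
    have hmulam : morreyNorm d u p (μ - lam) = morreyNorm d u p (lam - μ) :=
      morreyNorm_congr hp fun k => by
        show ‖(μ - lam) k‖₊ = ‖(lam - μ) k‖₊
        rw [Pi.sub_apply, Pi.sub_apply, ← nnnorm_neg, neg_sub]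
    have hlamμ : morreyNorm d u p (lam - μ) ^ q ≤ η := by
      rw [← hεq]; exact ENNReal.rpow_le_rpow hμε.le hq0.le
    have hFn : morreyNorm d u p (frestr F (w n)) ^ q ≤ η := by
      rw [← hεq]; exact ENNReal.rpow_le_rpow h2.le hq0.le
    set z : (Fin d → ℤ) → ℂ := fun k => if k ∈ F then 0 else w n k with hzdef
    have hzeq : w n = frestr F (w n) + z := by
      funext k
      by_cases hk : k ∈ F <;> simp [frestr, hzdef, hk]
    have e1 : morreyNorm d u p (w n) ^ q ≤
        morreyNorm d u p (frestr F (w n)) ^ q + morreyNorm d u p z ^ q :=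
      morrey_qadd_of_eq hp hzeq
    have e2 : morreyNorm d u p z ≤ morreyNorm d u p (μ + w n) := by
      refine morreyNorm_mono hp fun k => ?_
      by_cases hk : k ∈ F
      · simp [hzdef, hk]
      · have hk0 : μ k = 0 := by
          by_contra h
          exact hk (hμfin.mem_toFinset.2 (Function.mem_support.2 h))
        simp [hzdef, hk, hk0]
    have e4 : morreyNorm d u p (μ + w n) ^ q ≤
        morreyNorm d u p (lam + w n) ^ q + morreyNorm d u p (μ - lam) ^ q :=
      morrey_qadd_of_eq hp (by ring)
    have hcn : morreyNorm d u p (lam + w n) ^ q ≤ c' ^ q := ENNReal.rpow_le_rpow h1.le hq0.le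
    have hup : morreyNorm d u p (w n) ^ q ≤ c' ^ q + (η + η) := by
      calc morreyNorm d u p (w n) ^ q
          ≤ morreyNorm d u p (frestr F (w n)) ^ q + morreyNorm d u p z ^ q := e1
        _ ≤ η + (morreyNorm d u p (lam + w n) ^ q + η) := by
            refine add_le_add hFn ?_
            refine (ENNReal.rpow_le_rpow e2 hq0.le).trans (e4.trans ?_)
            rw [hmulam]
            exact add_le_add_right hlamμ _
        _ = morreyNorm d u p (lam + w n) ^ q + (η + η) := by ring
        _ ≤ c' ^ q + (η + η) := add_le_add_left hcn _
    have hlow : c ^ q < morreyNorm d u p (w n) ^ q := ENNReal.rpow_lt_rpow h0 hq0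
    have h24 : c' ^ q + (η + η) ≤ c' ^ q + (η + η + η + η) :=
      add_le_add_right (le_self_add.trans le_self_add) _
    exact absurd ((hlow.trans_le hup).trans_le (h24.trans hηc)) (lt_irrefl _)
  exact le_antisymm upper (max_le lower1 lower2)
end
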